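/- Strong duality holds for the entropic projection problem: inf over M ∈ ℝ^{N×N} of Σ_{r=1}^{R−1} ι_{C_r}(M𝟙) + ι_{C_R}(Mᵀ𝟙) + ε KL(M|G) equals sup over u = (u¹,...,u^R) ∈ (ℝᴺ)^R of −Σ_{r=1}^R ι_{C_r}*(−u^r) − ε⟨exp(⊕u/ε) − 𝟙_{N×N}, G⟩_F, where (⊕u)_{pq} = Σ_{r=1}^{R−1} u^r_p + u^R_q. Moreover the unique primal minimizer M_ε has the diagonal-scaling form (M_ε)_{pq} = exp((1/ε)Σ_{r=1}^{R−1} u^r_p) G_{pq} exp((1/ε) u^R_q) for any dual maximizer u. -/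

import Mathlib

open Finset

/-- Kullback–Leibler divergence between nonnegative matrices (reference `G > 0`),
convention `0 log 0 = 0`. -/
noncomputable def klSum (N : ℕ) (M G : Matrix (Fin N) (Fin N) ℝ) : ℝ :=
  ∑ p, ∑ q, (M p q * Real.log (M p q / G p q) - M p q + G p q)

/-- Dual objective of the entropic projection problem, for dual variables
`u = (u¹,…,u^R)` (the first `R` components constrain the row sums, the last one the
column sums) and the vector `s` of (finite) values of the conjugates `ι_{C_r}*(−u^r)`. -/
noncomputable def dualObj (N R : ℕ) (ε : ℝ) (G : Matrix (Fin N) (Fin N) ℝ)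
    (u : Fin (R + 1) → Fin N → ℝ) (s : Fin (R + 1) → ℝ) : ℝ :=
  -(∑ r, s r) - ε * ∑ p, ∑ q,
    ((Real.exp (((∑ r : Fin R, u r.castSucc p) + u (Fin.last R) q) / ε) - 1) * G p q)

/-- Set of values of the dual problem: `u` ranges over all dual variables whose
conjugates `ι_{C_r}*(−u^r)` are finite (encoded by `IsLUB`). -/
def dualSet (N R : ℕ) (ε : ℝ) (G : Matrix (Fin N) (Fin N) ℝ)
    (C : Fin (R + 1) → Set (Fin N → ℝ)) : Set ℝ :=
  {c | ∃ u : Fin (R + 1) → Fin N → ℝ, ∃ s : Fin (R + 1) → ℝ,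
    (∀ r, IsLUB {v : ℝ | ∃ x ∈ C r, v = ∑ p, x p * (-(u r p))} (s r)) ∧
    c = dualObj N R ε G u s}

namespace ESD


/-- Pointwise Young / Fenchel inequality, strict version. -/
lemma young_strict {ε g m a : ℝ} (hε : 0 < ε) (hg : 0 < g) (hm : 0 ≤ m)
    (hne : m ≠ Real.exp (a / ε) * g) :
    m * a - ε * ((Real.exp (a / ε) - 1) * g) < ε * (m * Real.log (m / g) - m + g) := by
  rcases eq_or_lt_of_le hm with h0 | hm
  · subst h0
    have : 0 < Real.exp (a / ε) * g := mul_pos (Real.exp_pos _) hg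
    nlinarith [this]
  · set x := a / ε - Real.log (m / g) with hx
    have hmg : 0 < m / g := div_pos hm hg
    have hxne : x ≠ 0 := by
      intro h
      apply hne
      have : Real.log (m / g) = a / ε := by rw [hx] at h; linarith
      have : m / g = Real.exp (a / ε) := by rw [← this, Real.exp_log hmg]
      field_simp at this
      linarith [this]
    have hlt : x + 1 < Real.exp x := Real.add_one_lt_exp hxne
    have hex : Real.exp x = Real.exp (a / ε) * (g / m) := by
      rw [hx, Real.exp_sub, Real.exp_log hmg]
      field_simp
    have h2 : (x + 1) * (ε * m) < Real.exp x * (ε * m) := by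
      apply mul_lt_mul_of_pos_right hlt (by positivity)
    rw [hex] at h2
    have hεa : ε * (a / ε) = a := by field_simp
    have h3 : Real.exp (a / ε) * (g / m) * (ε * m) = ε * (Real.exp (a / ε) * g) := by
      field_simp
    rw [h3] at h2
    have h4 : (x + 1) * (ε * m) = m * a - ε * m * Real.log (m / g) + ε * m := by
      rw [hx]; field_simp
    rw [h4] at h2
    nlinarith [h2]

lemma young_eq {ε g a : ℝ} (hε : 0 < ε) (hg : 0 < g) :
    (Real.exp (a / ε) * g) * a - ε * ((Real.exp (a / ε) - 1) * g)
      = ε * ((Real.exp (a / ε) * g) * Real.log ((Real.exp (a / ε) * g) / g) -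
          (Real.exp (a / ε) * g) + g) := by
  have h1 : (Real.exp (a / ε) * g) / g = Real.exp (a / ε) := by field_simp
  rw [h1, Real.log_exp]
  field_simp
  ring

lemma young {ε g m a : ℝ} (hε : 0 < ε) (hg : 0 < g) (hm : 0 ≤ m) :
    m * a - ε * ((Real.exp (a / ε) - 1) * g) ≤ ε * (m * Real.log (m / g) - m + g) := by
  by_cases h : m = Real.exp (a / ε) * g
  · subst h; exact le_of_eq (young_eq hε hg)
  · exact le_of_lt (young_strict hε hg hm h)

/-- with a = 0 : nonnegativity of KL terms -/
lemma kl_term_nonneg {g m : ℝ} (hg : 0 < g) (hm : 0 ≤ m) :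
    0 ≤ m * Real.log (m / g) - m + g := by
  have := young (ε := 1) (a := 0) one_pos hg hm
  simpa using this




variable {N : ℕ}

def dt (x y : Fin N → ℝ) : ℝ := ∑ p, x p * y p

lemma dt_self_nonneg (x : Fin N → ℝ) : 0 ≤ dt x x :=
  Finset.sum_nonneg fun p _ => mul_self_nonneg _

lemma dt_comm (x y : Fin N → ℝ) : dt x y = dt y x := by
  unfold dt; apply Finset.sum_congr rfl; intros; ring

lemma dt_add_left (a b c : Fin N → ℝ) : dt (a + b) c = dt a c + dt b c := by
  unfold dt; rw [← Finset.sum_add_distrib]; apply Finset.sum_congr rfl; intros; simp; ring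

lemma dt_expand (a b : Fin N → ℝ) :
    dt (a + b) (a + b) = dt a a + 2 * dt a b + dt b b := by
  unfold dt
  rw [Finset.mul_sum, ← Finset.sum_add_distrib, ← Finset.sum_add_distrib]
  apply Finset.sum_congr rfl; intros; simp; ring

lemma dt_cs (x y : Fin N → ℝ) : dt x y ≤ Real.sqrt (dt x x) * Real.sqrt (dt y y) := by
  have h := Finset.sum_mul_sq_le_sq_mul_sq Finset.univ x y
  have hx : ∑ p, x p ^ 2 = dt x x := by simp [dt, sq]
  have hy : ∑ p, y p ^ 2 = dt y y := by simp [dt, sq]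
  rw [hx, hy] at h
  calc dt x y ≤ |dt x y| := le_abs_self _
    _ = Real.sqrt ((dt x y) ^ 2) := (Real.sqrt_sq_eq_abs _).symm
    _ ≤ Real.sqrt (dt x x * dt y y) := Real.sqrt_le_sqrt h
    _ = Real.sqrt (dt x x) * Real.sqrt (dt y y) := Real.sqrt_mul (dt_self_nonneg x) _

/-- triangle inequality for the Euclidean norm `sqrt (dt · ·)` -/
lemma nrm_triangle (a b : Fin N → ℝ) :
    Real.sqrt (dt (a + b) (a + b)) ≤ Real.sqrt (dt a a) + Real.sqrt (dt b b) := by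
  have h1 : dt (a + b) (a + b) ≤ (Real.sqrt (dt a a) + Real.sqrt (dt b b))^2 := by
    rw [dt_expand]
    have h2 := dt_cs a b
    have ha : Real.sqrt (dt a a) ^ 2 = dt a a := Real.sq_sqrt (dt_self_nonneg a)
    have hb : Real.sqrt (dt b b) ^ 2 = dt b b := Real.sq_sqrt (dt_self_nonneg b)
    nlinarith [Real.sqrt_nonneg (dt a a), Real.sqrt_nonneg (dt b b)]
  calc Real.sqrt (dt (a + b) (a + b)) ≤ Real.sqrt ((Real.sqrt (dt a a) + Real.sqrt (dt b b))^2) :=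
        Real.sqrt_le_sqrt h1
    _ = |Real.sqrt (dt a a) + Real.sqrt (dt b b)| := Real.sqrt_sq_eq_abs _
    _ = _ := abs_of_nonneg (by positivity)

section Proj

variable (S : Set (Fin N → ℝ)) (P : (Fin N → ℝ) → (Fin N → ℝ))
variable (hP : ∀ y, P y ∈ S ∧
      (∀ x ∈ S, dt (y - P y) (y - P y) ≤ dt (y - x) (y - x)) ∧
      (∀ x ∈ S, dt (x - P y) (y - P y) ≤ 0))

/-- squared distance to `S` -/
noncomputable def qd (P : (Fin N → ℝ) → (Fin N → ℝ)) (y : Fin N → ℝ) : ℝ :=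
  dt (y - P y) (y - P y)

include hP

lemma qd_nonneg (y : Fin N → ℝ) : 0 ≤ qd P y := dt_self_nonneg _

lemma qd_zero_of_mem {y : Fin N → ℝ} (hy : y ∈ S) : qd P y = 0 := by
  have h := (hP y).2.1 y hy
  simp only [sub_self] at h
  have h0 : dt (0 : Fin N → ℝ) (0 : Fin N → ℝ) = 0 := by simp [dt]
  rw [h0] at h
  exact le_antisymm h (dt_self_nonneg _)

lemma mem_of_qd_zero {y : Fin N → ℝ} (hy : qd P y = 0) : y ∈ S := by
  have : ∀ p, (y p - P y p) * (y p - P y p) = 0 := by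
    have := (Finset.sum_eq_zero_iff_of_nonneg
      (fun p (_ : p ∈ Finset.univ) => mul_self_nonneg (y p - P y p))).1 (by
        simpa [qd, dt, Pi.sub_apply] using hy)
    intro p; exact this p (Finset.mem_univ p)
  have : y = P y := by
    funext p
    have := mul_self_eq_zero.1 (this p)
    linarith
  rw [this]; exact (hP y).1

/-- lower quadratic bound -/
lemma qd_lower (y z : Fin N → ℝ) :
    qd P y + 2 * dt (z - y) (y - P y) ≤ qd P z := by
  set d := y - P y with hd
  set x := P z with hx
  have hxS : x ∈ S := (hP z).1
  have hchar : dt (x - P y) d ≤ 0 := (hP y).2.2 x hxS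
  have hsplit : dt (z - x) d = dt (z - y) d + dt (y - x) d := by
    have : z - x = (z - y) + (y - x) := by abel
    rw [this, dt_add_left]
  have hsplit2 : dt (y - x) d = dt d d + dt (P y - x) d := by
    have : y - x = d + (P y - x) := by rw [hd]; abel
    rw [this, dt_add_left]
  have hPyx : dt (P y - x) d = - dt (x - P y) d := by
    unfold dt
    rw [← Finset.sum_neg_distrib]
    apply Finset.sum_congr rfl; intros; simp [Pi.sub_apply]; ring
  have hkey : dt (z - y) d + dt d d ≤ dt (z - x) d := by
    rw [hsplit, hsplit2, hPyx]; linarith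
  have hcs := dt_cs (z - x) d
  set a := Real.sqrt (dt (z - x) (z - x)) with ha
  set b := Real.sqrt (dt d d) with hb
  have ha2 : a ^ 2 = dt (z - x) (z - x) := Real.sq_sqrt (dt_self_nonneg _)
  have hb2 : b ^ 2 = dt d d := Real.sq_sqrt (dt_self_nonneg _)
  have hab : dt (z - y) d + dt d d ≤ a * b := le_trans hkey hcs
  have : 2 * (dt (z - y) d + dt d d) - dt d d ≤ dt (z - x) (z - x) := by
    nlinarith [sq_nonneg (a - b)]
  calc qd P y + 2 * dt (z - y) (y - P y) = dt d d + 2 * dt (z - y) d := by rw [qd]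
    _ ≤ dt (z - x) (z - x) := by linarith
    _ = qd P z := rfl

/-- upper quadratic bound -/
lemma qd_upper (y z : Fin N → ℝ) :
    qd P z ≤ qd P y + 2 * dt (z - y) (y - P y) + dt (z - y) (z - y) := by
  have hmin : qd P z ≤ dt (z - P y) (z - P y) := (hP z).2.1 (P y) (hP y).1
  have hexp : dt (z - P y) (z - P y)
      = dt (z - y) (z - y) + 2 * dt (z - y) (y - P y) + dt (y - P y) (y - P y) := by
    have : z - P y = (z - y) + (y - P y) := by abel
    rw [this, dt_expand]
  rw [hexp] at hmin
  unfold qd at hmin ⊢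
  linarith

end Proj

/-- `HasDerivAt` at `0` from a two-sided quadratic bound. -/
lemma hasDerivAt_of_quad {f : ℝ → ℝ} {v K : ℝ} (hK : 0 ≤ K)
    (h : ∀ t, |f t - f 0 - t * v| ≤ K * t ^ 2) : HasDerivAt f v 0 := by
  rw [hasDerivAt_iff_isLittleO, Asymptotics.isLittleO_iff]
  intro c hc
  have hr : (0:ℝ) < c / (K + 1) := div_pos hc (by linarith)
  filter_upwards [Metric.ball_mem_nhds (0:ℝ) hr] with t ht
  rw [Metric.mem_ball, Real.dist_eq, sub_zero] at ht
  have ht' : |t| * (K + 1) < c := by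
    rw [lt_div_iff₀ (by linarith : (0:ℝ) < K + 1)] at ht
    exact ht
  simp only [sub_zero, smul_eq_mul, Real.norm_eq_abs]
  have h1 : K * t ^ 2 ≤ c * |t| := by
    have h2 : t ^ 2 = |t| * |t| := by rw [← sq_abs, sq]
    rw [h2, ← mul_assoc]
    apply mul_le_mul_of_nonneg_right _ (abs_nonneg t)
    nlinarith [abs_nonneg t]
  exact le_trans (h t) h1




variable {N : ℕ}

/-- Euclidean dot product on `Fin N → ℝ`. -/
lemma continuous_dtsub (y : Fin N → ℝ) :
    Continuous (fun x : Fin N → ℝ => dt (y - x) (y - x)) := by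
  unfold dt
  refine continuous_finset_sum _ fun p _ => ?_
  exact ((continuous_const.sub (continuous_apply p)).mul
    (continuous_const.sub (continuous_apply p)))

/-- Existence of a projection onto a nonempty closed convex set, with the
variational characterization. -/
lemma exists_proj (S : Set (Fin N → ℝ)) (hne : S.Nonempty) (hcl : IsClosed S)
    (hconv : Convex ℝ S) (y : Fin N → ℝ) :
    ∃ z ∈ S, (∀ x ∈ S, dt (y - z) (y - z) ≤ dt (y - x) (y - x)) ∧
      (∀ x ∈ S, dt (x - z) (y - z) ≤ 0) := by
  obtain ⟨x₀, hx₀⟩ := hne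
  set f : (Fin N → ℝ) → ℝ := fun x => dt (y - x) (y - x) with hf
  have hfc : Continuous f := continuous_dtsub y
  set B := Real.sqrt (f x₀) with hB
  have hfx₀ : 0 ≤ f x₀ := dt_self_nonneg _
  -- the compact set
  set K := S ∩ {x | f x ≤ f x₀} with hK
  have hKcl : IsClosed K := hcl.inter (isClosed_le hfc continuous_const)
  have hKsub : K ⊆ Set.pi Set.univ (fun p => Set.Icc (y p - B) (y p + B)) := by
    rintro x ⟨-, hx⟩ p -
    have h1 : (y p - x p) * (y p - x p) ≤ f x₀ := by
      have := Finset.single_le_sum (f := fun p => (y p - x p) * (y p - x p))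
        (fun i _ => mul_self_nonneg _) (Finset.mem_univ p)
      calc (y p - x p) * (y p - x p) ≤ f x := by simpa [hf, dt] using this
        _ ≤ f x₀ := hx
    have h2 : |y p - x p| ≤ B := by
      rw [hB]
      rw [← Real.sqrt_mul_self (abs_nonneg (y p - x p))]
      apply Real.sqrt_le_sqrt
      calc |y p - x p| * |y p - x p| = (y p - x p) * (y p - x p) := by
            rw [← abs_mul, abs_of_nonneg (mul_self_nonneg _)]
        _ ≤ f x₀ := h1
    rw [abs_le] at h2
    constructor <;> [linarith [h2.1]; linarith [h2.2]]
  have hKcp : IsCompact K := IsCompact.of_isClosed_subset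
    (isCompact_univ_pi fun p => isCompact_Icc) hKcl hKsub
  have hKne : K.Nonempty := ⟨x₀, hx₀, by simp⟩
  obtain ⟨z, hzK, hzmin⟩ := hKcp.exists_isMinOn hKne hfc.continuousOn
  refine ⟨z, hzK.1, ?_, ?_⟩
  · -- global minimality over S
    intro x hx
    by_cases h : f x ≤ f x₀
    · exact hzmin ⟨hx, h⟩
    · calc f z ≤ f x₀ := hzK.2
        _ ≤ f x := le_of_not_ge h
  · -- variational characterization
    intro x hx
    have hmin : ∀ x' ∈ S, f z ≤ f x' := by
      intro x' hx'
      by_cases h : f x' ≤ f x₀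
      · exact hzmin ⟨hx', h⟩
      · calc f z ≤ f x₀ := hzK.2
          _ ≤ f x' := le_of_not_ge h
    by_contra hcon
    push_neg at hcon
    set δ := dt (x - z) (y - z) with hδ
    set Q := dt (x - z) (x - z) with hQ
    have hQ0 : 0 ≤ Q := dt_self_nonneg _
    set t := min 1 (δ / (Q + 1)) with ht
    have ht0 : 0 < t := lt_min one_pos (div_pos hcon (by linarith))
    have ht1 : t ≤ 1 := min_le_left _ _
    -- the point z + t (x - z) is in S
    have hmem : (fun p => z p + t * (x p - z p)) ∈ S := by
      have := hconv hzK.1 hx (by linarith : (0:ℝ) ≤ 1 - t) (le_of_lt ht0) (by ring)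
      convert this using 1
      funext p
      simp [Pi.add_apply, Pi.smul_apply, smul_eq_mul]
      ring
    have hexp : f (fun p => z p + t * (x p - z p)) = f z - 2 * t * δ + t^2 * Q := by
      simp only [hf, hδ, hQ, dt, Pi.sub_apply]
      rw [Finset.mul_sum, Finset.mul_sum, ← Finset.sum_sub_distrib, ← Finset.sum_add_distrib]
      apply Finset.sum_congr rfl
      intro p _
      ring
    have := hmin _ hmem
    rw [hexp] at this
    -- f z ≤ f z - 2 t δ + t² Q, so 2 δ ≤ t Q
    have h2 : 2 * δ ≤ t * Q := by nlinarith
    have h3 : t * Q < 2 * δ := by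
      have htle : t ≤ δ / (Q + 1) := min_le_right _ _
      have : t * Q ≤ (δ / (Q + 1)) * Q := by
        apply mul_le_mul_of_nonneg_right htle hQ0
      have hlt : (δ / (Q + 1)) * Q < 2 * δ := by
        rw [div_mul_eq_mul_div, div_lt_iff₀ (by linarith : (0:ℝ) < Q + 1)]
        nlinarith
      linarith
    linarith

/-- Choice form: a projection function. -/
lemma exists_projFun (S : Set (Fin N → ℝ)) (hne : S.Nonempty) (hcl : IsClosed S)
    (hconv : Convex ℝ S) :
    ∃ P : (Fin N → ℝ) → (Fin N → ℝ), ∀ y, P y ∈ S ∧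
      (∀ x ∈ S, dt (y - P y) (y - P y) ≤ dt (y - x) (y - x)) ∧
      (∀ x ∈ S, dt (x - P y) (y - P y) ≤ 0) := by
  choose P h1 h2 h3 using fun y => exists_proj S hne hcl hconv y
  exact ⟨P, fun y => ⟨h1 y, h2 y, h3 y⟩⟩


lemma dt_mul_left (t : ℝ) (x y : Fin N → ℝ) :
    dt (fun p => t * x p) y = t * dt x y := by
  unfold dt; rw [Finset.mul_sum]; apply Finset.sum_congr rfl; intros; ring

section Proj

variable (S : Set (Fin N → ℝ)) (P : (Fin N → ℝ) → (Fin N → ℝ))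
variable (hP : ∀ y, P y ∈ S ∧
      (∀ x ∈ S, dt (y - P y) (y - P y) ≤ dt (y - x) (y - x)) ∧
      (∀ x ∈ S, dt (x - P y) (y - P y) ≤ 0))

include hP

/-- derivative of the squared distance along a line -/
lemma qd_line_deriv (y w : Fin N → ℝ) :
    HasDerivAt (fun t : ℝ => qd P (fun p => y p + t * w p))
      (2 * dt w (y - P y)) 0 := by
  apply hasDerivAt_of_quad (dt_self_nonneg w)
  intro t
  have h0 : (fun p => y p + (0:ℝ) * w p) = y := by funext p; simp
  have hzy : (fun p => y p + t * w p) - y = fun p => t * w p := by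
    funext p; simp [Pi.sub_apply]
  have hl := qd_lower S P hP y (fun p => y p + t * w p)
  have hu := qd_upper S P hP y (fun p => y p + t * w p)
  rw [hzy, dt_mul_left] at hl hu
  have hww : dt (fun p => t * w p) (fun p => t * w p) = t ^ 2 * dt w w := by
    unfold dt; rw [Finset.mul_sum]; apply Finset.sum_congr rfl; intros; ring
  rw [hww] at hu
  rw [h0]
  rw [abs_le]
  constructor
  · nlinarith [hl]
  · nlinarith [hu]

/-- the squared distance is continuous -/
lemma qd_continuous : Continuous (qd (N := N) P) := by
  have key : ∀ y z : Fin N → ℝ,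
      Real.sqrt (qd P z) ≤ Real.sqrt (qd P y) + Real.sqrt (dt (z - y) (z - y)) := by
    intro y z
    have hmin : qd P z ≤ dt (z - P y) (z - P y) := (hP z).2.1 (P y) (hP y).1
    have hsq : Real.sqrt (qd P z) ≤ Real.sqrt (dt (z - P y) (z - P y)) :=
      Real.sqrt_le_sqrt hmin
    have : z - P y = (z - y) + (y - P y) := by abel
    rw [this] at hsq
    calc Real.sqrt (qd P z) ≤ _ := hsq
      _ ≤ Real.sqrt (dt (z - y) (z - y)) + Real.sqrt (dt (y - P y) (y - P y)) :=
        nrm_triangle _ _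
      _ = _ := by rw [qd]; ring
  have hlip : ∀ y z : Fin N → ℝ,
      |Real.sqrt (qd P z) - Real.sqrt (qd P y)| ≤ Real.sqrt (dt (z - y) (z - y)) := by
    intro y z
    rw [abs_sub_le_iff]
    constructor
    · linarith [key y z]
    · have := key z y
      have hswap : dt (y - z) (y - z) = dt (z - y) (z - y) := by
        unfold dt; apply Finset.sum_congr rfl; intros; simp [Pi.sub_apply]; ring
      rw [hswap] at this
      linarith
  have hbound : ∀ y z : Fin N → ℝ,
      Real.sqrt (dt (z - y) (z - y)) ≤ Real.sqrt N * dist z y := by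
    intro y z
    have h1 : dt (z - y) (z - y) ≤ N * (dist z y) ^ 2 := by
      unfold dt
      calc ∑ p, (z - y) p * (z - y) p ≤ ∑ _p : Fin N, (dist z y) ^ 2 := by
            apply Finset.sum_le_sum
            intro p _
            have := dist_le_pi_dist z y p
            have hd : |z p - y p| ≤ dist z y := by rwa [Real.dist_eq] at this
            simp only [Pi.sub_apply]
            rw [← abs_mul_self (z p - y p), abs_mul, sq]
            apply mul_le_mul hd hd (abs_nonneg _) dist_nonneg
        _ = N * (dist z y) ^ 2 := by
            rw [Finset.sum_const, Finset.card_univ, Fintype.card_fin, nsmul_eq_mul]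
    calc Real.sqrt (dt (z - y) (z - y)) ≤ Real.sqrt (N * (dist z y) ^ 2) :=
          Real.sqrt_le_sqrt h1
      _ = Real.sqrt N * dist z y := by
          rw [Real.sqrt_mul (by positivity), Real.sqrt_sq dist_nonneg]
  have hsqrtc : Continuous fun y => Real.sqrt (qd P y) := by
    rw [Metric.continuous_iff]
    intro y εc hεc
    refine ⟨εc / (Real.sqrt N + 1), by positivity, fun z hz => ?_⟩
    rw [Real.dist_eq]
    calc |Real.sqrt (qd P z) - Real.sqrt (qd P y)| ≤ Real.sqrt (dt (z - y) (z - y)) :=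
          hlip y z
      _ ≤ Real.sqrt N * dist z y := hbound y z
      _ < εc := by
          have h1 : Real.sqrt N * dist z y ≤ Real.sqrt N * (εc / (Real.sqrt N + 1)) := by
            apply mul_le_mul_of_nonneg_left (le_of_lt hz) (Real.sqrt_nonneg N)
          have h2 : Real.sqrt N * (εc / (Real.sqrt N + 1)) < εc := by
            rw [mul_comm, div_mul_eq_mul_div,
              div_lt_iff₀ (by positivity : (0:ℝ) < Real.sqrt N + 1)]
            nlinarith [Real.sqrt_nonneg (N:ℝ), hεc]
          linarith
  have : qd (N := N) P = fun y => Real.sqrt (qd P y) * Real.sqrt (qd P y) :=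
    funext fun y => (Real.mul_self_sqrt (dt_self_nonneg _)).symm
  rw [this]
  exact hsqrtc.mul hsqrtc

end Proj



variable {N : ℕ}

lemma kl_entry_eq {m g : ℝ} (hg : 0 < g) :
    m * Real.log (m / g) - m + g = m * Real.log m - m * Real.log g - m + g := by
  by_cases hm : m = 0
  · simp [hm]
  · rw [Real.log_div hm (ne_of_gt hg)]; ring

lemma klSum_eq (M G : Matrix (Fin N) (Fin N) ℝ) (hG : ∀ p q, 0 < G p q) :
    klSum N M G = ∑ p, ∑ q,
      (M p q * Real.log (M p q) - M p q * Real.log (G p q) - M p q + G p q) := by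
  unfold klSum
  apply Finset.sum_congr rfl; intro p _
  apply Finset.sum_congr rfl; intro q _
  exact kl_entry_eq (hG p q)

lemma klSum_continuous (G : Matrix (Fin N) (Fin N) ℝ) (hG : ∀ p q, 0 < G p q) :
    Continuous (fun M : Matrix (Fin N) (Fin N) ℝ => klSum N M G) := by
  have : (fun M : Matrix (Fin N) (Fin N) ℝ => klSum N M G) = fun M => ∑ p, ∑ q,
      (M p q * Real.log (M p q) - M p q * Real.log (G p q) - M p q + G p q) := by
    funext M; exact klSum_eq M G hG
  rw [this]
  apply continuous_finset_sum; intro p _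
  apply continuous_finset_sum; intro q _
  have hMpq : Continuous fun M : Matrix (Fin N) (Fin N) ℝ => M p q :=
    (continuous_apply q).comp (continuous_apply p)
  exact ((Real.continuous_mul_log.comp hMpq).sub (hMpq.mul continuous_const)).sub hMpq
    |>.add continuous_const

-- nonnegativity of each term, given m ≥ 0, g > 0 (uses stage-1 kl_term_nonneg)
lemma klSum_nonneg {M G : Matrix (Fin N) (Fin N) ℝ} (hG : ∀ p q, 0 < G p q)
    (hM : ∀ p q, 0 ≤ M p q) : 0 ≤ klSum N M G := by
  apply Finset.sum_nonneg; intro p _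
  apply Finset.sum_nonneg; intro q _
  exact kl_term_nonneg (hG p q) (hM p q)

lemma kl_entry_le_klSum {M G : Matrix (Fin N) (Fin N) ℝ} (hG : ∀ p q, 0 < G p q)
    (hM : ∀ p q, 0 ≤ M p q) (p q : Fin N) :
    M p q * Real.log (M p q / G p q) - M p q + G p q ≤ klSum N M G := by
  have h1 : M p q * Real.log (M p q / G p q) - M p q + G p q
      ≤ ∑ q', (M p q' * Real.log (M p q' / G p q') - M p q' + G p q') :=
    Finset.single_le_sum (f := fun q' => M p q' * Real.log (M p q' / G p q') - M p q' + G p q')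
      (fun q' _ => kl_term_nonneg (hG p q') (hM p q')) (Finset.mem_univ q)
  have h2 : ∑ q', (M p q' * Real.log (M p q' / G p q') - M p q' + G p q') ≤ klSum N M G :=
    Finset.single_le_sum
      (f := fun p' => ∑ q', (M p' q' * Real.log (M p' q' / G p' q') - M p' q' + G p' q'))
      (fun p' _ => Finset.sum_nonneg fun q' _ => kl_term_nonneg (hG p' q') (hM p' q'))
      (Finset.mem_univ p)
  exact le_trans h1 h2

/-- entry bound from a bound on a single KL term -/
lemma kl_entry_bound {g m B : ℝ} (hg : 0 < g) (hm : 0 ≤ m)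
    (hB : m * Real.log (m / g) - m + g ≤ B) : m ≤ max (Real.exp 2 * g) B := by
  by_contra hcon
  push_neg at hcon
  have h1 : Real.exp 2 * g < m := lt_of_le_of_lt (le_max_left _ _) hcon
  have h2 : B < m := lt_of_le_of_lt (le_max_right _ _) hcon
  have hm0 : 0 < m := lt_trans (by positivity) h1
  have hlog : 2 ≤ Real.log (m / g) := by
    have : Real.exp 2 ≤ m / g := by
      rw [le_div_iff₀ hg]; linarith
    calc (2:ℝ) = Real.log (Real.exp 2) := (Real.log_exp 2).symm
      _ ≤ Real.log (m / g) := Real.log_le_log (by positivity) this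
  have : m ≤ m * Real.log (m / g) - m + g := by nlinarith
  linarith

/-- derivative of a KL entry in one coordinate -/
lemma kl_entry_hasDerivAt {m g : ℝ} (hm : m ≠ 0) (e : ℝ) :
    HasDerivAt (fun t : ℝ => (m + t * e) * Real.log (m + t * e)
        - (m + t * e) * Real.log g - (m + t * e) + g)
      ((Real.log m - Real.log g) * e) 0 := by
  have haff : HasDerivAt (fun t : ℝ => m + t * e) e 0 := by
    simpa using ((hasDerivAt_id 0).mul_const e).const_add m
  have houter : HasDerivAt (fun x : ℝ => x * Real.log x - x * Real.log g - x + g)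
      (Real.log m - Real.log g) m := by
    have h1 := Real.hasDerivAt_mul_log hm
    have h2 : HasDerivAt (fun x : ℝ => x * Real.log g) (Real.log g) m := by
      simpa using (hasDerivAt_id m).mul_const (Real.log g)
    have h3 := ((h1.sub h2).sub (hasDerivAt_id m)).add_const g
    rw [show Real.log m - Real.log g = Real.log m + 1 - Real.log g - 1 by ring]
    exact h3
  have houter' : HasDerivAt (fun x : ℝ => x * Real.log x - x * Real.log g - x + g)
      (Real.log m - Real.log g) (m + 0 * e) := by simpa using houter
  have := houter'.comp 0 haff
  simpa [Function.comp_def] using this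

/-- sum exchange identity -/
lemma sum_mul_split {R : ℕ} (M : Matrix (Fin N) (Fin N) ℝ) (u : Fin (R + 1) → Fin N → ℝ) :
    ∑ p, ∑ q, M p q * ((∑ r : Fin R, u r.castSucc p) + u (Fin.last R) q)
      = (∑ r : Fin R, ∑ p, (∑ q, M p q) * u r.castSucc p)
        + ∑ q, (∑ p, M p q) * u (Fin.last R) q := by
  have h1 : ∀ p, ∑ q, M p q * ((∑ r : Fin R, u r.castSucc p) + u (Fin.last R) q)
      = (∑ q, M p q) * (∑ r : Fin R, u r.castSucc p) + ∑ q, M p q * u (Fin.last R) q := by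
    intro p
    rw [Finset.sum_mul]
    rw [← Finset.sum_add_distrib]
    apply Finset.sum_congr rfl; intro q _
    ring
  calc ∑ p, ∑ q, M p q * ((∑ r : Fin R, u r.castSucc p) + u (Fin.last R) q)
      = ∑ p, ((∑ q, M p q) * (∑ r : Fin R, u r.castSucc p) + ∑ q, M p q * u (Fin.last R) q) :=
        Finset.sum_congr rfl fun p _ => h1 p
    _ = ∑ p, (∑ r : Fin R, (∑ q, M p q) * u r.castSucc p) + ∑ p, ∑ q, M p q * u (Fin.last R) q := by
        rw [← Finset.sum_add_distrib]
        apply Finset.sum_congr rfl; intro p _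
        rw [Finset.mul_sum]
    _ = _ := by
        congr 1
        · rw [Finset.sum_comm]
        · rw [Finset.sum_comm]
          apply Finset.sum_congr rfl; intro q _
          rw [Finset.sum_mul]




variable {N : ℕ}

/-- row sums for `r < last`, column sums for `r = last` -/
def rc (N R : ℕ) (r : Fin (R + 1)) (M : Matrix (Fin N) (Fin N) ℝ) : Fin N → ℝ :=
  if r = Fin.last R then (fun q => ∑ p, M p q) else (fun p => ∑ q, M p q)

lemma rc_castSucc (R : ℕ) (r : Fin R) (M : Matrix (Fin N) (Fin N) ℝ) :
    rc N R r.castSucc M = fun p => ∑ q, M p q := by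
  rw [rc, if_neg (Fin.ne_of_lt (Fin.castSucc_lt_last r))]

lemma rc_last (R : ℕ) (M : Matrix (Fin N) (Fin N) ℝ) :
    rc N R (Fin.last R) M = fun q => ∑ p, M p q := by
  rw [rc, if_pos rfl]

lemma rc_continuous (R : ℕ) (r : Fin (R + 1)) :
    Continuous (fun M : Matrix (Fin N) (Fin N) ℝ => rc N R r M) := by
  unfold rc
  split
  · exact continuous_pi fun q => continuous_finset_sum _
      (fun p _ => (continuous_apply q).comp (continuous_apply p))
  · exact continuous_pi fun p => continuous_finset_sum _
      (fun q _ => (continuous_apply q).comp (continuous_apply p))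

/-- the perturbation direction on row/col sums -/
def wdir (N R : ℕ) (r : Fin (R + 1)) (p q : Fin N) : Fin N → ℝ :=
  if r = Fin.last R then (fun i => if i = q then 1 else 0) else (fun i => if i = p then 1 else 0)

lemma rc_perturb (R : ℕ) (r : Fin (R + 1)) (M : Matrix (Fin N) (Fin N) ℝ)
    (p q : Fin N) (t : ℝ) :
    rc N R r (fun p' q' => M p' q' + t * if p' = p ∧ q' = q then 1 else 0)
      = fun i => rc N R r M i + t * wdir N R r p q i := by
  unfold rc wdir
  split
  · funext i
    simp only [Finset.sum_add_distrib]
    congr 1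
    by_cases hiq : i = q
    · subst hiq
      simp [Finset.sum_ite_eq', Finset.mul_sum]
    · simp [hiq]
  · funext i
    simp only [Finset.sum_add_distrib]
    congr 1
    by_cases hip : i = p
    · subst hip
      simp [Finset.sum_ite_eq', Finset.mul_sum]
    · simp [hip]

/-- klSum of a single-entry perturbation -/
lemma klSum_entry_perturb (M G : Matrix (Fin N) (Fin N) ℝ) (hG : ∀ p q, 0 < G p q)
    (p q : Fin N) (t : ℝ) :
    klSum N (fun p' q' => M p' q' + t * if p' = p ∧ q' = q then 1 else 0) G
      = klSum N M G
        + (((M p q + t) * Real.log (M p q + t) - (M p q + t) * Real.log (G p q)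
            - (M p q + t) + G p q)
          - (M p q * Real.log (M p q) - M p q * Real.log (G p q) - M p q + G p q)) := by
  have hterm : ∀ m g : ℝ, 0 < g → m * Real.log (m / g) - m + g
      = m * Real.log m - m * Real.log g - m + g := fun m g hg => kl_entry_eq hg
  unfold klSum
  have key : ∀ p' q', ((M p' q' + t * if p' = p ∧ q' = q then 1 else 0) *
        Real.log ((M p' q' + t * if p' = p ∧ q' = q then 1 else 0) / G p' q')
      - (M p' q' + t * if p' = p ∧ q' = q then 1 else 0) + G p' q')
      = (M p' q' * Real.log (M p' q' / G p' q') - M p' q' + G p' q')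
        + (if p' = p ∧ q' = q then
            (((M p q + t) * Real.log (M p q + t) - (M p q + t) * Real.log (G p q)
              - (M p q + t) + G p q)
            - (M p q * Real.log (M p q) - M p q * Real.log (G p q) - M p q + G p q))
          else 0) := by
    intro p' q'
    by_cases h : p' = p ∧ q' = q
    · obtain ⟨hp, hq⟩ := h
      subst hp; subst hq
      rw [if_pos ⟨rfl, rfl⟩, if_pos ⟨rfl, rfl⟩, mul_one]
      rw [hterm _ _ (hG p' q'), hterm _ _ (hG p' q')]
      ring
    · rw [if_neg h, if_neg h, mul_zero, add_zero, add_zero]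
  simp only [key]
  rw [Finset.sum_congr rfl (fun p' _ => Finset.sum_add_distrib), Finset.sum_add_distrib]
  congr 1
  have : ∀ p', (∑ q', if p' = p ∧ q' = q then
      (((M p q + t) * Real.log (M p q + t) - (M p q + t) * Real.log (G p q)
        - (M p q + t) + G p q)
      - (M p q * Real.log (M p q) - M p q * Real.log (G p q) - M p q + G p q)) else 0)
      = if p' = p then
      (((M p q + t) * Real.log (M p q + t) - (M p q + t) * Real.log (G p q)
        - (M p q + t) + G p q)
      - (M p q * Real.log (M p q) - M p q * Real.log (G p q) - M p q + G p q)) else 0 := by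
    intro p'
    by_cases hp : p' = p
    · subst hp; simp [Finset.sum_ite_eq']
    · simp [hp]
  simp only [this]
  simp [Finset.sum_ite_eq']


end ESD

namespace ESD

/-- Step A: the penalized functional attains its minimum over nonnegative matrices. -/
lemma pen_min_exists {N R : ℕ} (ε : ℝ) (hε : 0 < ε) (G : Matrix (Fin N) (Fin N) ℝ)
    (hG : ∀ p q, 0 < G p q) (C : Fin (R + 1) → Set (Fin N → ℝ))
    (P : Fin (R + 1) → (Fin N → ℝ) → (Fin N → ℝ))
    (hP : ∀ r y, P r y ∈ C r ∧
      (∀ x ∈ C r, dt (y - P r y) (y - P r y) ≤ dt (y - x) (y - x)) ∧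
      (∀ x ∈ C r, dt (x - P r y) (y - P r y) ≤ 0))
    (c : ℝ) (hc : 0 < c) :
    ∃ Mc : Matrix (Fin N) (Fin N) ℝ, (∀ p q, 0 ≤ Mc p q) ∧
      ∀ M' : Matrix (Fin N) (Fin N) ℝ, (∀ p q, 0 ≤ M' p q) →
        ε * klSum N Mc G + c * ∑ r, qd (P r) (rc N R r Mc)
          ≤ ε * klSum N M' G + c * ∑ r, qd (P r) (rc N R r M') := by
  set F : Matrix (Fin N) (Fin N) ℝ → ℝ :=
    fun M => ε * klSum N M G + c * ∑ r, qd (P r) (rc N R r M) with hF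
  have hFc : Continuous F := by
    apply Continuous.add
    · exact continuous_const.mul (klSum_continuous G hG)
    · exact continuous_const.mul (continuous_finset_sum _ fun r _ =>
        (qd_continuous (C r) (P r) (hP r)).comp (rc_continuous R r))
  set A : Set (Matrix (Fin N) (Fin N) ℝ) := {M | ∀ p q, 0 ≤ M p q} with hA
  have hAclosed : IsClosed A := by
    have : A = ⋂ (p : Fin N) (q : Fin N), (fun M : Matrix (Fin N) (Fin N) ℝ => M p q) ⁻¹' (Set.Ici 0) := by
      ext M; simp [hA, Set.mem_iInter]
    rw [this]
    exact isClosed_iInter fun p => isClosed_iInter fun q =>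
      (isClosed_Ici).preimage ((continuous_apply q).comp (continuous_apply p))
  have hGA : G ∈ A := fun p q => le_of_lt (hG p q)
  set K := A ∩ {M | F M ≤ F G} with hK
  have hKclosed : IsClosed K := hAclosed.inter (isClosed_le hFc continuous_const)
  have hqd_nonneg : ∀ M, 0 ≤ c * ∑ r, qd (P r) (rc N R r M) := by
    intro M
    apply mul_nonneg (le_of_lt hc)
    exact Finset.sum_nonneg fun r _ => dt_self_nonneg _
  set B' := F G / ε with hB'
  set b : Fin N → Fin N → ℝ := fun p q => max (Real.exp 2 * G p q) B' with hb
  have hKsub : K ⊆ Set.pi Set.univ (fun p => Set.pi Set.univ (fun q => Set.Icc 0 (b p q))) := by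
    rintro M ⟨hMA, hMF⟩ p _
    intro q _
    constructor
    · exact hMA p q
    · have h1 : ε * klSum N M G ≤ F G := by
        have := hqd_nonneg M
        have : ε * klSum N M G ≤ F M := by rw [hF]; dsimp only; linarith
        exact le_trans this hMF
      have h2 : klSum N M G ≤ B' := by
        rw [hB', le_div_iff₀ hε]
        linarith [h1]
      have h3 := kl_entry_le_klSum hG hMA p q
      exact kl_entry_bound (hG p q) (hMA p q) (le_trans h3 h2)
  have hKcompact : IsCompact K := IsCompact.of_isClosed_subset
    (isCompact_univ_pi fun p => isCompact_univ_pi fun q => isCompact_Icc) hKclosed hKsub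
  have hKne : K.Nonempty := ⟨G, hGA, by simp⟩
  obtain ⟨Mc, hMcK, hMcmin⟩ := hKcompact.exists_isMinOn hKne hFc.continuousOn
  refine ⟨Mc, hMcK.1, ?_⟩
  intro M' hM'
  by_cases h : F M' ≤ F G
  · exact hMcmin ⟨hM', h⟩
  · calc F Mc ≤ F G := hMcK.2
      _ ≤ F M' := le_of_not_ge h


/-- Step B: the penalized minimizer has strictly positive entries. -/
lemma pen_min_pos {N R : ℕ} (ε : ℝ) (hε : 0 < ε) (G : Matrix (Fin N) (Fin N) ℝ)
    (hG : ∀ p q, 0 < G p q) (C : Fin (R + 1) → Set (Fin N → ℝ))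
    (P : Fin (R + 1) → (Fin N → ℝ) → (Fin N → ℝ))
    (hP : ∀ r y, P r y ∈ C r ∧
      (∀ x ∈ C r, dt (y - P r y) (y - P r y) ≤ dt (y - x) (y - x)) ∧
      (∀ x ∈ C r, dt (x - P r y) (y - P r y) ≤ 0))
    (c : ℝ) (hc : 0 < c) (Mc : Matrix (Fin N) (Fin N) ℝ) (hMc : ∀ p q, 0 ≤ Mc p q)
    (hmin : ∀ M' : Matrix (Fin N) (Fin N) ℝ, (∀ p q, 0 ≤ M' p q) →
      ε * klSum N Mc G + c * ∑ r, qd (P r) (rc N R r Mc)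
        ≤ ε * klSum N M' G + c * ∑ r, qd (P r) (rc N R r M')) :
    ∀ p q, 0 < Mc p q := by
  intro p q
  rcases lt_or_eq_of_le (hMc p q) with h | h
  · exact h
  exfalso
  set g0 := G p q with hg0
  set d : Fin (R + 1) → (Fin N → ℝ) := fun r => rc N R r Mc - P r (rc N R r Mc) with hd
  set w : Fin (R + 1) → (Fin N → ℝ) := fun r => wdir N R r p q with hw
  set A₀ := ε * (- Real.log g0 - 1) + c * ∑ r, 2 * dt (w r) (d r) with hA₀
  set B₀ := c * ∑ r, dt (w r) (w r) with hB₀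
  have hB₀0 : 0 ≤ B₀ := mul_nonneg (le_of_lt hc)
    (Finset.sum_nonneg fun r _ => dt_self_nonneg _)
  set t := min 1 (Real.exp (-(A₀ + B₀) / ε - 1)) with ht
  have ht0 : 0 < t := lt_min one_pos (Real.exp_pos _)
  have ht1 : t ≤ 1 := min_le_left _ _
  have hlogt : Real.log t ≤ -(A₀ + B₀) / ε - 1 := by
    calc Real.log t ≤ Real.log (Real.exp (-(A₀ + B₀) / ε - 1)) :=
          Real.log_le_log ht0 (min_le_right _ _)
      _ = -(A₀ + B₀) / ε - 1 := Real.log_exp _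
  set Mt : Matrix (Fin N) (Fin N) ℝ :=
    fun p' q' => Mc p' q' + t * if p' = p ∧ q' = q then 1 else 0 with hMt
  have hMtpos : ∀ p' q', 0 ≤ Mt p' q' := by
    intro p' q'
    rw [hMt]
    dsimp only
    by_cases hpq : p' = p ∧ q' = q
    · rw [if_pos hpq, mul_one]; linarith [hMc p' q']
    · rw [if_neg hpq, mul_zero, add_zero]; exact hMc p' q'
  -- KL part
  have hKL : klSum N Mt G = klSum N Mc G + (t * Real.log t - t * Real.log g0 - t) := by
    rw [hMt]
    rw [klSum_entry_perturb Mc G hG p q t]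
    rw [← h]
    simp
    exact Or.inl rfl
  -- penalty part
  have hpen : ∀ r, qd (P r) (rc N R r Mt)
      ≤ qd (P r) (rc N R r Mc) + t * (2 * dt (w r) (d r)) + t ^ 2 * dt (w r) (w r) := by
    intro r
    have hrc : rc N R r Mt = fun i => rc N R r Mc i + t * w r i := rc_perturb R r Mc p q t
    rw [hrc]
    have hz : (fun i => rc N R r Mc i + t * w r i) - rc N R r Mc = fun i => t * w r i := by
      funext i; simp [Pi.sub_apply]
    have := qd_upper (C r) (P r) (hP r) (rc N R r Mc) (fun i => rc N R r Mc i + t * w r i)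
    rw [hz] at this
    rw [dt_mul_left] at this
    have hww : dt (fun i => t * w r i) (fun i => t * w r i) = t ^ 2 * dt (w r) (w r) := by
      unfold dt; rw [Finset.mul_sum]; apply Finset.sum_congr rfl; intros; ring
    rw [hww] at this
    calc qd (P r) (fun i => rc N R r Mc i + t * w r i)
        ≤ qd (P r) (rc N R r Mc) + 2 * (t * dt (w r) (rc N R r Mc - P r (rc N R r Mc)))
          + t ^ 2 * dt (w r) (w r) := this
      _ = qd (P r) (rc N R r Mc) + t * (2 * dt (w r) (d r)) + t ^ 2 * dt (w r) (w r) := by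
          rw [hd]; ring
  have hFMt : ε * klSum N Mt G + c * ∑ r, qd (P r) (rc N R r Mt)
      ≤ ε * klSum N Mc G + c * ∑ r, qd (P r) (rc N R r Mc)
        + t * (ε * Real.log t + A₀ + B₀ * t) := by
    have hsum : ∑ r, qd (P r) (rc N R r Mt)
        ≤ ∑ r, qd (P r) (rc N R r Mc) + t * ∑ r, 2 * dt (w r) (d r)
          + t ^ 2 * ∑ r, dt (w r) (w r) := by
      rw [Finset.mul_sum, Finset.mul_sum, ← Finset.sum_add_distrib, ← Finset.sum_add_distrib]
      exact Finset.sum_le_sum fun r _ => hpen r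
    rw [hKL]
    have h1 : c * ∑ r, qd (P r) (rc N R r Mt)
        ≤ c * ∑ r, qd (P r) (rc N R r Mc) + t * (c * ∑ r, 2 * dt (w r) (d r)) + t ^ 2 * B₀ := by
      rw [hB₀]
      nlinarith [hsum, hc]
    rw [hA₀]
    nlinarith [h1, ht0]
  have hneg : ε * Real.log t + A₀ + B₀ * t ≤ -ε := by
    have h1 : B₀ * t ≤ B₀ := by nlinarith
    have h2 : ε * Real.log t ≤ ε * (-(A₀ + B₀) / ε - 1) :=
      mul_le_mul_of_nonneg_left hlogt (le_of_lt hε)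
    have h3 : ε * (-(A₀ + B₀) / ε - 1) = -(A₀ + B₀) - ε := by field_simp
    linarith
  have hlt : ε * klSum N Mt G + c * ∑ r, qd (P r) (rc N R r Mt)
      < ε * klSum N Mc G + c * ∑ r, qd (P r) (rc N R r Mc) := by
    have : t * (ε * Real.log t + A₀ + B₀ * t) ≤ t * (-ε) :=
      mul_le_mul_of_nonneg_left hneg (le_of_lt ht0)
    nlinarith [hFMt, ht0, hε]
  exact absurd (hmin Mt hMtpos) (not_le.mpr hlt)


/-- Step C: first-order conditions at the (positive) penalized minimizer. -/
lemma pen_min_stationary {N R : ℕ} (ε : ℝ) (hε : 0 < ε) (G : Matrix (Fin N) (Fin N) ℝ)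
    (hG : ∀ p q, 0 < G p q) (C : Fin (R + 1) → Set (Fin N → ℝ))
    (P : Fin (R + 1) → (Fin N → ℝ) → (Fin N → ℝ))
    (hP : ∀ r y, P r y ∈ C r ∧
      (∀ x ∈ C r, dt (y - P r y) (y - P r y) ≤ dt (y - x) (y - x)) ∧
      (∀ x ∈ C r, dt (x - P r y) (y - P r y) ≤ 0))
    (c : ℝ) (hc : 0 < c) (Mc : Matrix (Fin N) (Fin N) ℝ) (hMc : ∀ p q, 0 ≤ Mc p q)
    (hmin : ∀ M' : Matrix (Fin N) (Fin N) ℝ, (∀ p q, 0 ≤ M' p q) →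
      ε * klSum N Mc G + c * ∑ r, qd (P r) (rc N R r Mc)
        ≤ ε * klSum N M' G + c * ∑ r, qd (P r) (rc N R r M'))
    (hpos : ∀ p q, 0 < Mc p q) :
    ∀ p q, ε * (Real.log (Mc p q) - Real.log (G p q))
      + c * ∑ r, 2 * dt (wdir N R r p q) (rc N R r Mc - P r (rc N R r Mc)) = 0 := by
  intro p q
  set m := Mc p q with hm
  have hm0 : 0 < m := hpos p q
  set g0 := G p q with hg0
  set w : Fin (R + 1) → (Fin N → ℝ) := fun r => wdir N R r p q with hw
  set φ : ℝ → ℝ := fun t =>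
    ε * (klSum N Mc G + (((m + t) * Real.log (m + t) - (m + t) * Real.log g0 - (m + t) + g0)
        - (m * Real.log m - m * Real.log g0 - m + g0)))
      + c * ∑ r, qd (P r) (fun i => rc N R r Mc i + t * w r i) with hφ
  have hφ_eq : ∀ t, φ t = ε * klSum N
        (fun p' q' => Mc p' q' + t * if p' = p ∧ q' = q then 1 else 0) G
      + c * ∑ r, qd (P r)
          (rc N R r (fun p' q' => Mc p' q' + t * if p' = p ∧ q' = q then 1 else 0)) := by
    intro t
    rw [hφ]
    dsimp only
    rw [klSum_entry_perturb Mc G hG p q t]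
    congr 1
    congr 1
    apply Finset.sum_congr rfl
    intro r _
    rw [rc_perturb R r Mc p q t]
  have hφ0 : φ 0 = ε * klSum N Mc G + c * ∑ r, qd (P r) (rc N R r Mc) := by
    rw [hφ]
    dsimp only
    have h1 : ∀ r : Fin (R+1), (fun i => rc N R r Mc i + (0:ℝ) * w r i) = rc N R r Mc := by
      intro r; funext i; simp
    simp only [add_zero, h1]
    ring
  -- derivative
  set D := ε * (Real.log m - Real.log g0) + c * ∑ r, 2 * dt (w r) (rc N R r Mc - P r (rc N R r Mc))
    with hD
  have hderiv : HasDerivAt φ D 0 := by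
    have h1 : HasDerivAt (fun t : ℝ => (m + t * 1) * Real.log (m + t * 1)
        - (m + t * 1) * Real.log g0 - (m + t * 1) + g0) ((Real.log m - Real.log g0) * 1) 0 :=
      kl_entry_hasDerivAt (ne_of_gt hm0) 1
    have h1' : HasDerivAt (fun t : ℝ => (m + t) * Real.log (m + t)
        - (m + t) * Real.log g0 - (m + t) + g0) (Real.log m - Real.log g0) 0 := by
      simpa using h1
    have h2 : HasDerivAt (fun t : ℝ => klSum N Mc G + (((m + t) * Real.log (m + t)
        - (m + t) * Real.log g0 - (m + t) + g0) - (m * Real.log m - m * Real.log g0 - m + g0)))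
        (Real.log m - Real.log g0) 0 := ((h1'.sub_const _).const_add _)
    have h3 : HasDerivAt (fun t : ℝ => ∑ r, qd (P r) (fun i => rc N R r Mc i + t * w r i))
        (∑ r, 2 * dt (w r) (rc N R r Mc - P r (rc N R r Mc))) 0 := by
      apply HasDerivAt.fun_sum
      intro r _
      exact qd_line_deriv (C r) (P r) (hP r) (rc N R r Mc) (w r)
    exact (h2.const_mul ε).add (h3.const_mul c)
  -- local minimality
  have hlocal : IsLocalMin φ 0 := by
    have hev : ∀ᶠ t in nhds (0:ℝ), t ∈ Set.Ioo (-m) m :=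
      Filter.eventually_iff_exists_mem.mpr ⟨Set.Ioo (-m) m,
        Ioo_mem_nhds (by linarith) hm0, fun t ht => ht⟩
    apply Filter.Eventually.mono hev
    intro t ht
    rw [hφ_eq t, hφ0]
    apply hmin
    intro p' q'
    by_cases hpq : p' = p ∧ q' = q
    · rw [if_pos hpq, mul_one]
      obtain ⟨hp, hq⟩ := hpq; subst hp; subst hq
      have : -m < t := ht.1
      rw [← hm]
      linarith
    · rw [if_neg hpq, mul_zero, add_zero]; exact hMc p' q'
  have := hlocal.hasDerivAt_eq_zero hderiv
  rw [hD] at this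
  exact this


lemma dt_sub_left {N : ℕ} (a b c : Fin N → ℝ) : dt (a - b) c = dt a c - dt b c := by
  unfold dt; rw [← Finset.sum_sub_distrib]; apply Finset.sum_congr rfl; intros
  simp [Pi.sub_apply]; ring

lemma dt_basis {N : ℕ} (p : Fin N) (x : Fin N → ℝ) :
    dt (fun i => if i = p then 1 else 0) x = x p := by
  unfold dt
  rw [Finset.sum_eq_single p]
  · simp
  · intro i _ hi; simp [hi]
  · intro h; exact absurd (Finset.mem_univ p) h

/-- Step D: the stationarity conditions produce a dual-feasible value above `ε·KL(Mc)`. -/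
lemma pen_dual {N R : ℕ} (ε : ℝ) (hε : 0 < ε) (G : Matrix (Fin N) (Fin N) ℝ)
    (hG : ∀ p q, 0 < G p q) (C : Fin (R + 1) → Set (Fin N → ℝ))
    (P : Fin (R + 1) → (Fin N → ℝ) → (Fin N → ℝ))
    (hP : ∀ r y, P r y ∈ C r ∧
      (∀ x ∈ C r, dt (y - P r y) (y - P r y) ≤ dt (y - x) (y - x)) ∧
      (∀ x ∈ C r, dt (x - P r y) (y - P r y) ≤ 0))
    (c : ℝ) (hc : 0 < c) (Mc : Matrix (Fin N) (Fin N) ℝ)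
    (hpos : ∀ p q, 0 < Mc p q)
    (hstat : ∀ p q, ε * (Real.log (Mc p q) - Real.log (G p q))
      + c * ∑ r, 2 * dt (wdir N R r p q) (rc N R r Mc - P r (rc N R r Mc)) = 0) :
    ∃ v ∈ dualSet N R ε G C, ε * klSum N Mc G ≤ v := by
  set y : Fin (R + 1) → (Fin N → ℝ) := fun r => rc N R r Mc with hy
  set d : Fin (R + 1) → (Fin N → ℝ) := fun r => y r - P r (y r) with hd
  set u : Fin (R + 1) → Fin N → ℝ := fun r i => -(2 * c * d r i) with hu
  set s : Fin (R + 1) → ℝ := fun r => ∑ i, (P r (y r)) i * (2 * c * d r i) with hs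
  -- the LUB property
  have hlub : ∀ r, IsLUB {v : ℝ | ∃ x ∈ C r, v = ∑ i, x i * (-(u r i))} (s r) := by
    intro r
    apply IsGreatest.isLUB
    constructor
    · exact ⟨P r (y r), (hP r (y r)).1, by simp [hu, hs]⟩
    · rintro v ⟨x, hx, rfl⟩
      have hchar := (hP r (y r)).2.2 x hx
      have hcalc : ∑ i, x i * (-(u r i)) - s r = 2 * c * dt (x - P r (y r)) (d r) := by
        rw [hs, hu]
        unfold dt
        dsimp only
        rw [Finset.mul_sum, ← Finset.sum_sub_distrib]
        apply Finset.sum_congr rfl; intros i _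
        simp only [Pi.sub_apply]; ring
      have : 2 * c * dt (x - P r (y r)) (d r) ≤ 0 := by
        have hdr : d r = y r - P r (y r) := rfl
        rw [hdr]
        nlinarith [hchar]
      linarith [hcalc.symm ▸ this]
  -- coordinate form of the exponent
  set a : Fin N → Fin N → ℝ :=
    fun p q => (∑ r : Fin R, u r.castSucc p) + u (Fin.last R) q with ha
  have hdtw : ∀ (p q : Fin N) (r : Fin (R + 1)),
      dt (wdir N R r p q) (d r) = if r = Fin.last R then d r q else d r p := by
    intro p q r
    unfold wdir
    split
    · exact dt_basis q (d r)
    · exact dt_basis p (d r)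
  have haeq : ∀ p q, a p q = -(c * ∑ r, 2 * dt (wdir N R r p q) (rc N R r Mc - P r (rc N R r Mc))) := by
    intro p q
    have h1 : ∀ r : Fin (R + 1), rc N R r Mc - P r (rc N R r Mc) = d r := fun r => rfl
    simp only [h1, hdtw]
    rw [ha]
    dsimp only
    rw [Finset.mul_sum, Fin.sum_univ_castSucc]
    rw [neg_add]
    congr 1
    · rw [← Finset.sum_neg_distrib]
      apply Finset.sum_congr rfl; intro r _
      rw [if_neg (Fin.ne_of_lt (Fin.castSucc_lt_last r))]
      rw [hu]; ring
    · rw [if_pos rfl, hu]; ring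
  have hMform : ∀ p q, Mc p q = Real.exp (a p q / ε) * G p q := by
    intro p q
    have h0 := hstat p q
    have h1 : ε * (Real.log (Mc p q) - Real.log (G p q)) = a p q := by
      rw [haeq p q]; linarith
    have h2 : Real.log (Mc p q) = Real.log (G p q) + a p q / ε := by
      field_simp at h1 ⊢
      linarith
    calc Mc p q = Real.exp (Real.log (Mc p q)) := (Real.exp_log (hpos p q)).symm
      _ = Real.exp (Real.log (G p q) + a p q / ε) := by rw [h2]
      _ = Real.exp (a p q / ε) * G p q := by
          rw [Real.exp_add, Real.exp_log (hG p q)]; ring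
  refine ⟨dualObj N R ε G u s, ⟨u, s, hlub, rfl⟩, ?_⟩
  -- value computation
  have hkl : ε * klSum N Mc G = (∑ p, ∑ q, Mc p q * a p q)
      - ε * ∑ p, ∑ q, ((Real.exp (a p q / ε) - 1) * G p q) := by
    unfold klSum
    rw [Finset.mul_sum, Finset.mul_sum, ← Finset.sum_sub_distrib]
    apply Finset.sum_congr rfl; intro p _
    rw [Finset.mul_sum, Finset.mul_sum, ← Finset.sum_sub_distrib]
    apply Finset.sum_congr rfl; intro q _
    have := young_eq (ε := ε) (g := G p q) (a := a p q) hε (hG p q)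
    rw [hMform p q]
    linarith [this]
  have hsplit := sum_mul_split (R := R) Mc u
  have hI : ∑ p, ∑ q, Mc p q * a p q = ∑ r, ∑ i, y r i * u r i := by
    rw [ha]
    dsimp only
    rw [hsplit]
    rw [Fin.sum_univ_castSucc (f := fun r : Fin (R+1) => ∑ i, y r i * u r i)]
    congr 1
    · apply Finset.sum_congr rfl; intro r _
      apply Finset.sum_congr rfl; intro i _
      have hyy : y r.castSucc i = ∑ q, Mc i q := by
        simp only [hy]; rw [rc_castSucc]
      rw [hyy]
    · apply Finset.sum_congr rfl; intro i _
      have hyy : y (Fin.last R) i = ∑ p, Mc p i := by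
        simp only [hy]; rw [rc_last]
      rw [hyy]
  have hII : ∀ r, ∑ i, y r i * u r i = -(2 * c) * dt (y r) (d r) := by
    intro r
    rw [hu]
    dsimp only
    unfold dt
    rw [Finset.mul_sum]
    apply Finset.sum_congr rfl; intros; ring
  have hIII : ∀ r, s r = 2 * c * dt (P r (y r)) (d r) := by
    intro r
    rw [hs]
    dsimp only
    unfold dt
    rw [Finset.mul_sum]
    apply Finset.sum_congr rfl; intros; ring
  have hkey : -(∑ r, s r) - ∑ p, ∑ q, Mc p q * a p q = ∑ r, 2 * c * dt (d r) (d r) := by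
    rw [hI]
    rw [← Finset.sum_neg_distrib, ← Finset.sum_sub_distrib]
    apply Finset.sum_congr rfl; intro r _
    rw [hII r, hIII r]
    have : dt (y r) (d r) - dt (P r (y r)) (d r) = dt (d r) (d r) := by
      rw [← dt_sub_left]
    nlinarith [this]
  have hpos2 : 0 ≤ ∑ r, 2 * c * dt (d r) (d r) :=
    Finset.sum_nonneg fun r _ => mul_nonneg (by linarith) (dt_self_nonneg _)
  unfold dualObj
  rw [hkl]
  have : -(∑ r, s r) - ε * ∑ p, ∑ q, ((Real.exp (((∑ r : Fin R, u r.castSucc p) + u (Fin.last R) q) / ε) - 1) * G p q)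
      = -(∑ r, s r) - ε * ∑ p, ∑ q, ((Real.exp (a p q / ε) - 1) * G p q) := rfl
  rw [this]
  linarith [hkey, hpos2]


/-- Weak duality. -/
lemma weak_duality {N R : ℕ} (ε : ℝ) (hε : 0 < ε) (G : Matrix (Fin N) (Fin N) ℝ)
    (hG : ∀ p q, 0 < G p q) (C : Fin (R + 1) → Set (Fin N → ℝ))
    (M : Matrix (Fin N) (Fin N) ℝ) (hM : ∀ p q, 0 ≤ M p q)
    (hrows : ∀ r : Fin R, (fun p => ∑ q, M p q) ∈ C r.castSucc)
    (hcols : (fun q => ∑ p, M p q) ∈ C (Fin.last R))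
    (u : Fin (R + 1) → Fin N → ℝ) (s : Fin (R + 1) → ℝ)
    (hlub : ∀ r, IsLUB {v : ℝ | ∃ x ∈ C r, v = ∑ p, x p * (-(u r p))} (s r)) :
    dualObj N R ε G u s ≤ ε * klSum N M G := by
  set a : Fin N → Fin N → ℝ :=
    fun p q => (∑ r : Fin R, u r.castSucc p) + u (Fin.last R) q with ha
  have hyoung : (∑ p, ∑ q, M p q * a p q)
      - ε * ∑ p, ∑ q, ((Real.exp (a p q / ε) - 1) * G p q) ≤ ε * klSum N M G := by
    unfold klSum
    rw [Finset.mul_sum, Finset.mul_sum, ← Finset.sum_sub_distrib]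
    apply Finset.sum_le_sum
    intro p _
    rw [Finset.mul_sum, Finset.mul_sum, ← Finset.sum_sub_distrib]
    apply Finset.sum_le_sum
    intro q _
    exact young hε (hG p q) (hM p q)
  have hbound : -(∑ r, s r) ≤ ∑ p, ∑ q, M p q * a p q := by
    rw [ha]
    dsimp only
    rw [sum_mul_split M u]
    rw [Fin.sum_univ_castSucc (f := fun r : Fin (R+1) => s r)]
    have h1 : ∀ r : Fin R, -(s r.castSucc) ≤ ∑ p, (∑ q, M p q) * u r.castSucc p := by
      intro r
      have hmem : (∑ p, (fun p => ∑ q, M p q) p * (-(u r.castSucc p)))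
          ∈ {v : ℝ | ∃ x ∈ C r.castSucc, v = ∑ p, x p * (-(u r.castSucc p))} :=
        ⟨(fun p => ∑ q, M p q), hrows r, rfl⟩
      have := (hlub r.castSucc).1 hmem
      have heq : (∑ p, (fun p => ∑ q, M p q) p * (-(u r.castSucc p)))
          = -∑ p, (∑ q, M p q) * u r.castSucc p := by
        rw [← Finset.sum_neg_distrib]
        apply Finset.sum_congr rfl; intros; ring
      rw [heq] at this
      linarith
    have h2 : -(s (Fin.last R)) ≤ ∑ q, (∑ p, M p q) * u (Fin.last R) q := by
      have hmem : (∑ i, (fun q => ∑ p, M p q) i * (-(u (Fin.last R) i)))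
          ∈ {v : ℝ | ∃ x ∈ C (Fin.last R), v = ∑ i, x i * (-(u (Fin.last R) i))} :=
        ⟨(fun q => ∑ p, M p q), hcols, rfl⟩
      have := (hlub (Fin.last R)).1 hmem
      have heq : (∑ i, (fun q => ∑ p, M p q) i * (-(u (Fin.last R) i)))
          = -∑ i, (∑ p, M p i) * u (Fin.last R) i := by
        rw [← Finset.sum_neg_distrib]
        apply Finset.sum_congr rfl; intros; ring
      rw [heq] at this
      linarith
    have h3 : -(∑ r : Fin R, s r.castSucc) ≤ ∑ r : Fin R, ∑ p, (∑ q, M p q) * u r.castSucc p := by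
      rw [← Finset.sum_neg_distrib]
      exact Finset.sum_le_sum fun r _ => h1 r
    linarith
  unfold dualObj
  have : -(∑ r, s r) - ε * ∑ p, ∑ q,
      ((Real.exp (((∑ r : Fin R, u r.castSucc p) + u (Fin.last R) q) / ε) - 1) * G p q)
      = -(∑ r, s r) - ε * ∑ p, ∑ q, ((Real.exp (a p q / ε) - 1) * G p q) := rfl
  rw [this]
  linarith


/-- lower bound on the linear term via the conjugate values -/
lemma dual_sum_bound {N R : ℕ} (C : Fin (R + 1) → Set (Fin N → ℝ))
    (M : Matrix (Fin N) (Fin N) ℝ)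
    (hrows : ∀ r : Fin R, (fun p => ∑ q, M p q) ∈ C r.castSucc)
    (hcols : (fun q => ∑ p, M p q) ∈ C (Fin.last R))
    (u : Fin (R + 1) → Fin N → ℝ) (s : Fin (R + 1) → ℝ)
    (hlub : ∀ r, IsLUB {v : ℝ | ∃ x ∈ C r, v = ∑ p, x p * (-(u r p))} (s r)) :
    -(∑ r, s r) ≤ ∑ p, ∑ q, M p q * ((∑ r : Fin R, u r.castSucc p) + u (Fin.last R) q) := by
  rw [sum_mul_split M u]
  rw [Fin.sum_univ_castSucc (f := fun r : Fin (R+1) => s r)]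
  have h1 : ∀ r : Fin R, -(s r.castSucc) ≤ ∑ p, (∑ q, M p q) * u r.castSucc p := by
    intro r
    have hmem : (∑ p, (fun p => ∑ q, M p q) p * (-(u r.castSucc p)))
        ∈ {v : ℝ | ∃ x ∈ C r.castSucc, v = ∑ p, x p * (-(u r.castSucc p))} :=
      ⟨(fun p => ∑ q, M p q), hrows r, rfl⟩
    have := (hlub r.castSucc).1 hmem
    have heq : (∑ p, (fun p => ∑ q, M p q) p * (-(u r.castSucc p)))
        = -∑ p, (∑ q, M p q) * u r.castSucc p := by
      rw [← Finset.sum_neg_distrib]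
      apply Finset.sum_congr rfl; intros; ring
    rw [heq] at this
    linarith
  have h2 : -(s (Fin.last R)) ≤ ∑ q, (∑ p, M p q) * u (Fin.last R) q := by
    have hmem : (∑ i, (fun q => ∑ p, M p q) i * (-(u (Fin.last R) i)))
        ∈ {v : ℝ | ∃ x ∈ C (Fin.last R), v = ∑ i, x i * (-(u (Fin.last R) i))} :=
      ⟨(fun q => ∑ p, M p q), hcols, rfl⟩
    have := (hlub (Fin.last R)).1 hmem
    have heq : (∑ i, (fun q => ∑ p, M p q) i * (-(u (Fin.last R) i)))
        = -∑ i, (∑ p, M p i) * u (Fin.last R) i := by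
      rw [← Finset.sum_neg_distrib]
      apply Finset.sum_congr rfl; intros; ring
    rw [heq] at this
    linarith
  have h3 : -(∑ r : Fin R, s r.castSucc) ≤ ∑ r : Fin R, ∑ p, (∑ q, M p q) * u r.castSucc p := by
    rw [← Finset.sum_neg_distrib]
    exact Finset.sum_le_sum fun r _ => h1 r
  linarith

/-- midpoint convexity of the KL entry, with strictness -/
lemma kl_entry_mid {g x y : ℝ} (hg : 0 < g) (hx : 0 ≤ x) (hy : 0 ≤ y) :
    ((x + y) / 2) * Real.log (((x + y) / 2) / g) - (x + y) / 2 + g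
      ≤ ((x * Real.log (x / g) - x + g) + (y * Real.log (y / g) - y + g)) / 2 := by
  have h := Real.convexOn_mul_log.2 (Set.mem_Ici.mpr hx) (Set.mem_Ici.mpr hy)
    (by norm_num : (0:ℝ) ≤ 1/2) (by norm_num : (0:ℝ) ≤ 1/2) (by norm_num)
  simp only [smul_eq_mul] at h
  have hmid : (1:ℝ)/2 * x + 1/2 * y = (x + y)/2 := by ring
  rw [hmid] at h
  rw [kl_entry_eq hg, kl_entry_eq hg, kl_entry_eq hg]
  nlinarith [h]

lemma kl_entry_mid_strict {g x y : ℝ} (hg : 0 < g) (hx : 0 ≤ x) (hy : 0 ≤ y) (hne : x ≠ y) :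
    ((x + y) / 2) * Real.log (((x + y) / 2) / g) - (x + y) / 2 + g
      < ((x * Real.log (x / g) - x + g) + (y * Real.log (y / g) - y + g)) / 2 := by
  have h := Real.strictConvexOn_mul_log.2 (Set.mem_Ici.mpr hx) (Set.mem_Ici.mpr hy) hne
    (by norm_num : (0:ℝ) < 1/2) (by norm_num : (0:ℝ) < 1/2) (by norm_num)
  simp only [smul_eq_mul] at h
  have hmid : (1:ℝ)/2 * x + 1/2 * y = (x + y)/2 := by ring
  rw [hmid] at h
  rw [kl_entry_eq hg, kl_entry_eq hg, kl_entry_eq hg]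
  nlinarith [h]


/-- Existence and uniqueness of the primal minimizer. -/
lemma primal_min {N R : ℕ} (G : Matrix (Fin N) (Fin N) ℝ) (hG : ∀ p q, 0 < G p q)
    (C : Fin (R + 1) → Set (Fin N → ℝ))
    (hCclosed : ∀ r, IsClosed (C r)) (hCconv : ∀ r, Convex ℝ (C r))
    (νplus : Fin N → ℝ) (hlast : C (Fin.last R) = {νplus})
    (Pi' : Set (Matrix (Fin N) (Fin N) ℝ))
    (hPi : Pi' = {M | (∀ p q, 0 ≤ M p q) ∧
      (∀ r : Fin R, (fun p => ∑ q, M p q) ∈ C r.castSucc) ∧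
      (fun q => ∑ p, M p q) ∈ C (Fin.last R)})
    (M₀ : Matrix (Fin N) (Fin N) ℝ) (hM₀ : M₀ ∈ Pi') :
    ∃! Mε : Matrix (Fin N) (Fin N) ℝ,
      Mε ∈ Pi' ∧ ∀ M ∈ Pi', klSum N Mε G ≤ klSum N M G := by
  have contRows : Continuous (fun M : Matrix (Fin N) (Fin N) ℝ => (fun p => ∑ q, M p q)) :=
    continuous_pi fun p => continuous_finset_sum _ fun q _ =>
      (continuous_apply q).comp (continuous_apply p)
  have contCols : Continuous (fun M : Matrix (Fin N) (Fin N) ℝ => (fun q => ∑ p, M p q)) :=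
    continuous_pi fun q => continuous_finset_sum _ fun p _ =>
      (continuous_apply q).comp (continuous_apply p)
  have hclosed : IsClosed Pi' := by
    rw [hPi]
    have hdecomp : {M : Matrix (Fin N) (Fin N) ℝ | (∀ p q, 0 ≤ M p q) ∧
        (∀ r : Fin R, (fun p => ∑ q, M p q) ∈ C r.castSucc) ∧
        (fun q => ∑ p, M p q) ∈ C (Fin.last R)}
        = {M : Matrix (Fin N) (Fin N) ℝ | ∀ p q, 0 ≤ M p q}
          ∩ ((⋂ r : Fin R, (fun M : Matrix (Fin N) (Fin N) ℝ =>
              (fun p => ∑ q, M p q)) ⁻¹' (C r.castSucc))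
          ∩ ((fun M : Matrix (Fin N) (Fin N) ℝ =>
              (fun q => ∑ p, M p q)) ⁻¹' (C (Fin.last R)))) := by
      ext M
      simp only [Set.mem_setOf_eq, Set.mem_inter_iff, Set.mem_iInter, Set.mem_preimage]
    rw [hdecomp]
    refine IsClosed.inter ?_ (IsClosed.inter ?_ ?_)
    · have : {M : Matrix (Fin N) (Fin N) ℝ | ∀ p q, 0 ≤ M p q}
          = ⋂ (p : Fin N) (q : Fin N),
            (fun M : Matrix (Fin N) (Fin N) ℝ => M p q) ⁻¹' (Set.Ici 0) := by
        ext M; simp [Set.mem_iInter]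
      rw [this]
      exact isClosed_iInter fun p => isClosed_iInter fun q =>
        (isClosed_Ici).preimage ((continuous_apply q).comp (continuous_apply p))
    · exact isClosed_iInter fun r => (hCclosed r.castSucc).preimage contRows
    · exact (hCclosed (Fin.last R)).preimage contCols
  have hsub : Pi' ⊆ Set.pi Set.univ
      (fun p => Set.pi Set.univ (fun q => Set.Icc 0 (νplus q))) := by
    intro M hM
    rw [hPi] at hM
    obtain ⟨hpos, hrows, hcols⟩ := hM
    rw [hlast, Set.mem_singleton_iff] at hcols
    intro p _ q _
    refine ⟨hpos p q, ?_⟩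
    have hcol : ∑ p', M p' q = νplus q := congrFun hcols q
    rw [← hcol]
    exact Finset.single_le_sum (f := fun p' => M p' q) (fun p' _ => hpos p' q)
      (Finset.mem_univ p)
  have hcompact : IsCompact Pi' := IsCompact.of_isClosed_subset
    (isCompact_univ_pi fun p => isCompact_univ_pi fun q => isCompact_Icc) hclosed hsub
  obtain ⟨Mε, hMεmem, hMεmin⟩ := hcompact.exists_isMinOn ⟨M₀, hM₀⟩
    (klSum_continuous G hG).continuousOn
  have huniq : ∀ M₁ M₂ : Matrix (Fin N) (Fin N) ℝ,
      (M₁ ∈ Pi' ∧ ∀ M ∈ Pi', klSum N M₁ G ≤ klSum N M G) →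
      (M₂ ∈ Pi' ∧ ∀ M ∈ Pi', klSum N M₂ G ≤ klSum N M G) → M₁ = M₂ := by
    intro M₁ M₂ h₁ h₂
    by_contra hne
    have hval : klSum N M₁ G = klSum N M₂ G :=
      le_antisymm (h₁.2 M₂ h₂.1) (h₂.2 M₁ h₁.1)
    have hex : ∃ p q, M₁ p q ≠ M₂ p q := by
      by_contra hc
      push_neg at hc
      exact hne (by funext p q; exact hc p q)
    obtain ⟨p₀, q₀, hne₀⟩ := hex
    set mid : Matrix (Fin N) (Fin N) ℝ := fun p q => (M₁ p q + M₂ p q) / 2 with hmid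
    have h₁' := h₁.1; have h₂' := h₂.1
    rw [hPi] at h₁' h₂'
    have hmidmem : mid ∈ Pi' := by
      rw [hPi]
      refine ⟨fun p q => by
        have := h₁'.1 p q; have := h₂'.1 p q
        rw [hmid]; dsimp only; linarith, ?_, ?_⟩
      · intro r
        have hconv := hCconv r.castSucc (h₁'.2.1 r) (h₂'.2.1 r)
          (by norm_num : (0:ℝ) ≤ 1/2) (by norm_num : (0:ℝ) ≤ 1/2) (by norm_num)
        have heq : (fun p => ∑ q, mid p q)
            = (1/2 : ℝ) • (fun p => ∑ q, M₁ p q) + (1/2 : ℝ) • (fun p => ∑ q, M₂ p q) := by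
          funext p
          simp only [Pi.add_apply, Pi.smul_apply, smul_eq_mul, hmid]
          rw [Finset.mul_sum, Finset.mul_sum, ← Finset.sum_add_distrib]
          apply Finset.sum_congr rfl; intros; ring
        rw [heq]; exact hconv
      · have hconv := hCconv (Fin.last R) h₁'.2.2 h₂'.2.2
          (by norm_num : (0:ℝ) ≤ 1/2) (by norm_num : (0:ℝ) ≤ 1/2) (by norm_num)
        have heq : (fun q => ∑ p, mid p q)
            = (1/2 : ℝ) • (fun q => ∑ p, M₁ p q) + (1/2 : ℝ) • (fun q => ∑ p, M₂ p q) := by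
          funext q
          simp only [Pi.add_apply, Pi.smul_apply, smul_eq_mul, hmid]
          rw [Finset.mul_sum, Finset.mul_sum, ← Finset.sum_add_distrib]
          apply Finset.sum_congr rfl; intros; ring
        rw [heq]; exact hconv
    have hstrict : klSum N mid G < (klSum N M₁ G + klSum N M₂ G) / 2 := by
      have hrhs : (klSum N M₁ G + klSum N M₂ G) / 2
          = ∑ p, ∑ q, (((M₁ p q * Real.log (M₁ p q / G p q) - M₁ p q + G p q)
            + (M₂ p q * Real.log (M₂ p q / G p q) - M₂ p q + G p q)) / 2) := by
        unfold klSum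
        rw [← Finset.sum_add_distrib, Finset.sum_div]
        apply Finset.sum_congr rfl; intro p _
        rw [← Finset.sum_add_distrib, Finset.sum_div]
      rw [hrhs]
      unfold klSum
      apply Finset.sum_lt_sum
      · intro p _
        apply Finset.sum_le_sum
        intro q _
        exact kl_entry_mid (hG p q) (h₁'.1 p q) (h₂'.1 p q)
      · refine ⟨p₀, Finset.mem_univ p₀, ?_⟩
        apply Finset.sum_lt_sum
        · intro q _
          exact kl_entry_mid (hG p₀ q) (h₁'.1 p₀ q) (h₂'.1 p₀ q)
        · exact ⟨q₀, Finset.mem_univ q₀,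
            kl_entry_mid_strict (hG p₀ q₀) (h₁'.1 p₀ q₀) (h₂'.1 p₀ q₀) hne₀⟩
      done
    rw [← hval] at hstrict
    have : klSum N M₁ G ≤ klSum N mid G := h₁.2 mid hmidmem
    have h2 : (klSum N M₁ G + klSum N M₁ G) / 2 = klSum N M₁ G := by ring
    rw [h2] at hstrict
    linarith
  exact ⟨Mε, ⟨hMεmem, fun M hM => hMεmin hM⟩,
    fun M' h' => huniq M' Mε h' ⟨hMεmem, fun M hM => hMεmin hM⟩⟩


/-- Strong duality: the primal and dual optimal values coincide. -/
lemma strong_duality_eq {N R : ℕ} (ε : ℝ) (hε : 0 < ε) (G : Matrix (Fin N) (Fin N) ℝ)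
    (hG : ∀ p q, 0 < G p q) (C : Fin (R + 1) → Set (Fin N → ℝ))
    (P : Fin (R + 1) → (Fin N → ℝ) → (Fin N → ℝ))
    (hP : ∀ r y, P r y ∈ C r ∧
      (∀ x ∈ C r, dt (y - P r y) (y - P r y) ≤ dt (y - x) (y - x)) ∧
      (∀ x ∈ C r, dt (x - P r y) (y - P r y) ≤ 0))
    (Pi' : Set (Matrix (Fin N) (Fin N) ℝ))
    (hPi : Pi' = {M | (∀ p q, 0 ≤ M p q) ∧
      (∀ r : Fin R, (fun p => ∑ q, M p q) ∈ C r.castSucc) ∧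
      (fun q => ∑ p, M p q) ∈ C (Fin.last R)})
    (M₀ : Matrix (Fin N) (Fin N) ℝ) (hM₀ : M₀ ∈ Pi') :
    sInf {c : ℝ | ∃ M ∈ Pi', c = ε * klSum N M G} = sSup (dualSet N R ε G C) := by
  obtain ⟨hM₀pos, hM₀rows, hM₀cols⟩ : (∀ p q, 0 ≤ M₀ p q) ∧
      (∀ r : Fin R, (fun p => ∑ q, M₀ p q) ∈ C r.castSucc) ∧
      (fun q => ∑ p, M₀ p q) ∈ C (Fin.last R) := by rw [hPi] at hM₀; exact hM₀
  set Pset := {c : ℝ | ∃ M ∈ Pi', c = ε * klSum N M G} with hPset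
  set D := dualSet N R ε G C with hDset
  have hPne : Pset.Nonempty := ⟨ε * klSum N M₀ G, M₀, hM₀, rfl⟩
  have hPbdd : BddBelow Pset := by
    refine ⟨0, ?_⟩
    rintro b ⟨M, hM, rfl⟩
    rw [hPi] at hM
    exact mul_nonneg (le_of_lt hε) (klSum_nonneg hG hM.1)
  have hDub : ∀ v ∈ D, v ≤ ε * klSum N M₀ G := by
    rintro v ⟨u, s, hlub, rfl⟩
    exact weak_duality ε hε G hG C M₀ hM₀pos hM₀rows hM₀cols u s hlub
  have hDbdd : BddAbove D := ⟨ε * klSum N M₀ G, hDub⟩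
  -- the penalty of M₀ vanishes
  have hqd0 : ∀ r, qd (P r) (rc N R r M₀) = 0 := by
    intro r
    induction r using Fin.lastCases with
    | last =>
        rw [rc_last]
        exact qd_zero_of_mem (C (Fin.last R)) (P (Fin.last R)) (hP (Fin.last R)) hM₀cols
    | cast r =>
        rw [rc_castSucc]
        exact qd_zero_of_mem (C r.castSucc) (P r.castSucc) (hP r.castSucc) (hM₀rows r)
  -- penalized minimizers for each n
  have hstep : ∀ n : ℕ, ∃ Mc : Matrix (Fin N) (Fin N) ℝ, (∀ p q, 0 ≤ Mc p q) ∧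
      klSum N Mc G ≤ klSum N M₀ G ∧
      (∑ r, qd (P r) (rc N R r Mc)) ≤ ε * klSum N M₀ G / ((n : ℝ) + 1) ∧
      ∃ v ∈ D, ε * klSum N Mc G ≤ v := by
    intro n
    set c : ℝ := (n : ℝ) + 1 with hcdef
    have hc : 0 < c := by positivity
    obtain ⟨Mc, hpos0, hmin⟩ := pen_min_exists ε hε G hG C P hP c hc
    have hposMc := pen_min_pos ε hε G hG C P hP c hc Mc hpos0 hmin
    have hstat := pen_min_stationary ε hε G hG C P hP c hc Mc hpos0 hmin hposMc
    obtain ⟨v, hvD, hvle⟩ := pen_dual ε hε G hG C P hP c hc Mc hposMc hstat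
    have hqdsum0 : ∑ r, qd (P r) (rc N R r M₀) = 0 :=
      Finset.sum_eq_zero fun r _ => hqd0 r
    have hminM₀ := hmin M₀ hM₀pos
    rw [hqdsum0, mul_zero, add_zero] at hminM₀
    have hqdMc : 0 ≤ ∑ r, qd (P r) (rc N R r Mc) :=
      Finset.sum_nonneg fun r _ => dt_self_nonneg _
    have hklMc : 0 ≤ klSum N Mc G := klSum_nonneg hG hpos0
    refine ⟨Mc, hpos0, ?_, ?_, v, hvD, hvle⟩
    · nlinarith
    · rw [le_div_iff₀ hc]
      nlinarith
  choose Mc h1 h2 h3 h4 using hstep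
  -- compact container
  set K := {M : Matrix (Fin N) (Fin N) ℝ | (∀ p q, 0 ≤ M p q) ∧ klSum N M G ≤ klSum N M₀ G}
    with hKdef
  have hKclosed : IsClosed K := by
    have hdecomp : K = {M : Matrix (Fin N) (Fin N) ℝ | ∀ p q, 0 ≤ M p q}
        ∩ {M | klSum N M G ≤ klSum N M₀ G} := by
      ext M; simp [hKdef, Set.mem_inter_iff]
    rw [hdecomp]
    refine IsClosed.inter ?_ (isClosed_le (klSum_continuous G hG) continuous_const)
    have : {M : Matrix (Fin N) (Fin N) ℝ | ∀ p q, 0 ≤ M p q}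
        = ⋂ (p : Fin N) (q : Fin N),
          (fun M : Matrix (Fin N) (Fin N) ℝ => M p q) ⁻¹' (Set.Ici 0) := by
      ext M; simp [Set.mem_iInter]
    rw [this]
    exact isClosed_iInter fun p => isClosed_iInter fun q =>
      (isClosed_Ici).preimage ((continuous_apply q).comp (continuous_apply p))
  have hKsub : K ⊆ Set.pi Set.univ (fun p => Set.pi Set.univ
      (fun q => Set.Icc 0 (max (Real.exp 2 * G p q) (klSum N M₀ G)))) := by
    rintro M ⟨hMpos, hMkl⟩ p _ q _
    refine ⟨hMpos p q, ?_⟩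
    exact kl_entry_bound (hG p q) (hMpos p q)
      (le_trans (kl_entry_le_klSum hG hMpos p q) hMkl)
  have hKcompact : IsCompact K := IsCompact.of_isClosed_subset
    (isCompact_univ_pi fun p => isCompact_univ_pi fun q => isCompact_Icc) hKclosed hKsub
  have hMcK : ∀ n, Mc n ∈ K := fun n => ⟨h1 n, h2 n⟩
  haveI : FirstCountableTopology (Matrix (Fin N) (Fin N) ℝ) :=
    inferInstanceAs (FirstCountableTopology (Fin N → Fin N → ℝ))
  obtain ⟨Mbar, hMbarK, φ, hφ, htend⟩ := hKcompact.tendsto_subseq hMcK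
  -- the penalty of the limit vanishes
  set Q : Matrix (Fin N) (Fin N) ℝ → ℝ := fun M => ∑ r, qd (P r) (rc N R r M) with hQdef
  have hQcont : Continuous Q := continuous_finset_sum _ fun r _ =>
    (qd_continuous (C r) (P r) (hP r)).comp (rc_continuous R r)
  have hQtend : Filter.Tendsto (fun k => Q (Mc (φ k))) Filter.atTop (nhds (Q Mbar)) :=
    (hQcont.tendsto Mbar).comp htend
  have hbnd_tend : Filter.Tendsto (fun k : ℕ => ε * klSum N M₀ G / ((k : ℝ) + 1))
      Filter.atTop (nhds 0) := by
    have h := tendsto_one_div_add_atTop_nhds_zero_nat (𝕜 := ℝ)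
    have := h.const_mul (ε * klSum N M₀ G)
    rw [mul_zero] at this
    convert this using 2 with k
    ring
  have hQbar_le : Q Mbar ≤ 0 := by
    apply le_of_tendsto_of_tendsto' hQtend hbnd_tend
    intro k
    calc Q (Mc (φ k)) ≤ ε * klSum N M₀ G / ((φ k : ℝ) + 1) := h3 (φ k)
      _ ≤ ε * klSum N M₀ G / ((k : ℝ) + 1) := by
          apply div_le_div_of_nonneg_left _ (by positivity) _
          · exact mul_nonneg (le_of_lt hε) (klSum_nonneg hG hM₀pos)
          · have : (k : ℝ) ≤ (φ k : ℝ) := by exact_mod_cast hφ.le_apply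
            linarith
  have hQbar : Q Mbar = 0 := le_antisymm hQbar_le
    (Finset.sum_nonneg fun r _ => dt_self_nonneg _)
  have hqdbar : ∀ r, qd (P r) (rc N R r Mbar) = 0 := by
    intro r
    have := (Finset.sum_eq_zero_iff_of_nonneg
      (fun r (_ : r ∈ Finset.univ) => dt_self_nonneg
        ((rc N R r Mbar) - P r (rc N R r Mbar)))).1 hQbar
    exact this r (Finset.mem_univ r)
  have hMbarPi : Mbar ∈ Pi' := by
    rw [hPi]
    refine ⟨hMbarK.1, ?_, ?_⟩
    · intro r
      have := mem_of_qd_zero (C r.castSucc) (P r.castSucc) (hP r.castSucc) (hqdbar r.castSucc)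
      rwa [rc_castSucc] at this
    · have := mem_of_qd_zero (C (Fin.last R)) (P (Fin.last R)) (hP (Fin.last R))
        (hqdbar (Fin.last R))
      rwa [rc_last] at this
  -- conclude
  have hle1 : sInf Pset ≤ ε * klSum N Mbar G := csInf_le hPbdd ⟨Mbar, hMbarPi, rfl⟩
  have hle2 : ε * klSum N Mbar G ≤ sSup D := by
    have htend2 : Filter.Tendsto (fun k => ε * klSum N (Mc (φ k)) G)
        Filter.atTop (nhds (ε * klSum N Mbar G)) :=
      ((continuous_const.mul (klSum_continuous G hG)).tendsto Mbar).comp htend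
    apply le_of_tendsto htend2
    apply Filter.Eventually.of_forall
    intro k
    obtain ⟨v, hvD, hvle⟩ := h4 (φ k)
    exact le_trans hvle (le_csSup hDbdd hvD)
  have hge : sSup D ≤ sInf Pset := by
    obtain ⟨v₀, hv₀D, _⟩ := h4 0
    apply csSup_le ⟨v₀, hv₀D⟩
    rintro v ⟨u, s, hlub, rfl⟩
    apply le_csInf hPne
    rintro b ⟨M, hM, rfl⟩
    rw [hPi] at hM
    exact weak_duality ε hε G hG C M hM.1 hM.2.1 hM.2.2 u s hlub
  linarith


/-- Part 3: the minimizer has diagonal scaling form for any dual maximizer. -/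
lemma scaling_form {N R : ℕ} (ε : ℝ) (hε : 0 < ε) (G : Matrix (Fin N) (Fin N) ℝ)
    (hG : ∀ p q, 0 < G p q) (C : Fin (R + 1) → Set (Fin N → ℝ))
    (Pi' : Set (Matrix (Fin N) (Fin N) ℝ))
    (hPi : Pi' = {M | (∀ p q, 0 ≤ M p q) ∧
      (∀ r : Fin R, (fun p => ∑ q, M p q) ∈ C r.castSucc) ∧
      (fun q => ∑ p, M p q) ∈ C (Fin.last R)})
    (hduality : sInf {c : ℝ | ∃ M ∈ Pi', c = ε * klSum N M G} = sSup (dualSet N R ε G C))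
    (Mε : Matrix (Fin N) (Fin N) ℝ)
    (hMε : Mε ∈ Pi' ∧ ∀ M ∈ Pi', klSum N Mε G ≤ klSum N M G)
    (u : Fin (R + 1) → Fin N → ℝ) (s : Fin (R + 1) → ℝ)
    (hlub : ∀ r, IsLUB {v : ℝ | ∃ x ∈ C r, v = ∑ p, x p * (-(u r p))} (s r))
    (hopt : dualObj N R ε G u s = sSup (dualSet N R ε G C)) :
    ∀ p q, Mε p q = Real.exp ((1 / ε) * ∑ r : Fin R, u r.castSucc p) * G p q *
      Real.exp ((1 / ε) * u (Fin.last R) q) := by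
  have hMεPi := hMε.1
  obtain ⟨hpos, hrows, hcols⟩ : (∀ p q, 0 ≤ Mε p q) ∧
      (∀ r : Fin R, (fun p => ∑ q, Mε p q) ∈ C r.castSucc) ∧
      (fun q => ∑ p, Mε p q) ∈ C (Fin.last R) := by rw [hPi] at hMεPi; exact hMεPi
  set Pset := {c : ℝ | ∃ M ∈ Pi', c = ε * klSum N M G} with hPset
  have hPbdd : BddBelow Pset := by
    refine ⟨0, ?_⟩
    rintro b ⟨M, hM, rfl⟩
    rw [hPi] at hM
    exact mul_nonneg (le_of_lt hε) (klSum_nonneg hG hM.1)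
  have hval : ε * klSum N Mε G = sInf Pset := by
    apply le_antisymm
    · refine le_csInf ⟨ε * klSum N Mε G, Mε, hMε.1, rfl⟩ ?_
      rintro b ⟨M, hM, rfl⟩
      exact mul_le_mul_of_nonneg_left (hMε.2 M hM) (le_of_lt hε)
    · exact csInf_le hPbdd ⟨Mε, hMε.1, rfl⟩
  have hdeq : dualObj N R ε G u s = ε * klSum N Mε G := by
    rw [hopt, ← hduality, ← hval]
  set a : Fin N → Fin N → ℝ :=
    fun p q => (∑ r : Fin R, u r.castSucc p) + u (Fin.last R) q with ha
  have hdobj : dualObj N R ε G u s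
      = -(∑ r, s r) - ε * ∑ p, ∑ q, ((Real.exp (a p q / ε) - 1) * G p q) := rfl
  have hbound := dual_sum_bound C Mε hrows hcols u s hlub
  set S : Fin N → Fin N → ℝ := fun p q =>
    ε * (Mε p q * Real.log (Mε p q / G p q) - Mε p q + G p q)
      - (Mε p q * a p q - ε * ((Real.exp (a p q / ε) - 1) * G p q)) with hS
  have hSnonneg : ∀ p q, 0 ≤ S p q := by
    intro p q
    have := young (ε := ε) (g := G p q) (m := Mε p q) (a := a p q) hε (hG p q) (hpos p q)
    rw [hS]; dsimp only; linarith
  have hsum_eq : ∑ p, ∑ q, S p q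
      = ε * klSum N Mε G - (∑ p, ∑ q, Mε p q * a p q)
        + ε * ∑ p, ∑ q, ((Real.exp (a p q / ε) - 1) * G p q) := by
    rw [hS]
    unfold klSum
    rw [Finset.mul_sum, Finset.mul_sum, ← Finset.sum_sub_distrib, ← Finset.sum_add_distrib]
    apply Finset.sum_congr rfl; intro p _
    rw [Finset.mul_sum, Finset.mul_sum, ← Finset.sum_sub_distrib, ← Finset.sum_add_distrib]
    apply Finset.sum_congr rfl; intro q _
    ring
  have hT0 : ∑ p, ∑ q, S p q = 0 := by
    have hTge : 0 ≤ ∑ p, ∑ q, S p q :=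
      Finset.sum_nonneg fun p _ => Finset.sum_nonneg fun q _ => hSnonneg p q
    have hTle : ∑ p, ∑ q, S p q ≤ 0 := by
      rw [hsum_eq]
      rw [hdobj] at hdeq
      have hb : -(∑ r, s r) ≤ ∑ p, ∑ q, Mε p q * a p q := hbound
      linarith
    linarith
  have hz : ∀ p q, S p q = 0 := by
    have houter := (Finset.sum_eq_zero_iff_of_nonneg
      (fun p (_ : p ∈ Finset.univ) =>
        Finset.sum_nonneg fun q _ => hSnonneg p q)).1 hT0
    intro p q
    have hinner := (Finset.sum_eq_zero_iff_of_nonneg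
      (fun q (_ : q ∈ Finset.univ) => hSnonneg p q)).1 (houter p (Finset.mem_univ p))
    exact hinner q (Finset.mem_univ q)
  intro p q
  have hform : Mε p q = Real.exp (a p q / ε) * G p q := by
    by_contra hne
    have := young_strict (ε := ε) (g := G p q) (m := Mε p q) (a := a p q)
      hε (hG p q) (hpos p q) hne
    have hzpq := hz p q
    rw [hS] at hzpq
    dsimp only at hzpq
    linarith
  rw [hform]
  have hexp : a p q / ε = (1 / ε) * (∑ r : Fin R, u r.castSucc p)
      + (1 / ε) * u (Fin.last R) q := by
    rw [ha]; dsimp only; field_simp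
  rw [hexp, Real.exp_add]
  ring

end ESD

open ESD in
/-- strong duality for the entropic projection problem, and the diagonal
scaling form of the unique primal minimizer in terms of any dual maximizer. -/
theorem entropic_strong_duality
    (N R : ℕ) (ε : ℝ) (hε : 0 < ε)
    (G : Matrix (Fin N) (Fin N) ℝ) (hG : ∀ p q, 0 < G p q)
    (C : Fin (R + 1) → Set (Fin N → ℝ))
    (hCclosed : ∀ r, IsClosed (C r)) (hCconv : ∀ r, Convex ℝ (C r))
    (νplus : Fin N → ℝ) (hlast : C (Fin.last R) = {νplus})
    (Pi' : Set (Matrix (Fin N) (Fin N) ℝ))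
    (hPi : Pi' = {M | (∀ p q, 0 ≤ M p q) ∧
      (∀ r : Fin R, (fun p => ∑ q, M p q) ∈ C r.castSucc) ∧
      (fun q => ∑ p, M p q) ∈ C (Fin.last R)})
    (hqual : ∃ M₀ ∈ Pi', ∀ p q, 0 < M₀ p q) :
    sInf {c : ℝ | ∃ M ∈ Pi', c = ε * klSum N M G} = sSup (dualSet N R ε G C) ∧
    (∃! Mε : Matrix (Fin N) (Fin N) ℝ,
      Mε ∈ Pi' ∧ ∀ M ∈ Pi', klSum N Mε G ≤ klSum N M G) ∧
    ∀ Mε : Matrix (Fin N) (Fin N) ℝ,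
      (Mε ∈ Pi' ∧ ∀ M ∈ Pi', klSum N Mε G ≤ klSum N M G) →
      ∀ u : Fin (R + 1) → Fin N → ℝ, ∀ s : Fin (R + 1) → ℝ,
        (∀ r, IsLUB {v : ℝ | ∃ x ∈ C r, v = ∑ p, x p * (-(u r p))} (s r)) →
        dualObj N R ε G u s = sSup (dualSet N R ε G C) →
        ∀ p q, Mε p q
          = Real.exp ((1 / ε) * ∑ r : Fin R, u r.castSucc p) * G p q *
            Real.exp ((1 / ε) * u (Fin.last R) q) := by
  obtain ⟨M₀, hM₀, hM₀pos⟩ := hqual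
  have hM₀' : (∀ p q, 0 ≤ M₀ p q) ∧
      (∀ r : Fin R, (fun p => ∑ q, M₀ p q) ∈ C r.castSucc) ∧
      (fun q => ∑ p, M₀ p q) ∈ C (Fin.last R) := by rw [hPi] at hM₀; exact hM₀
  have hCne : ∀ r, (C r).Nonempty := by
    intro r
    induction r using Fin.lastCases with
    | last => exact ⟨_, hM₀'.2.2⟩
    | cast r => exact ⟨_, hM₀'.2.1 r⟩
  have hPex := fun r => exists_projFun (C r) (hCne r) (hCclosed r) (hCconv r)
  choose P hP using hPex
  have hdual := strong_duality_eq ε hε G hG C P hP Pi' hPi M₀ hM₀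
  have hmin := primal_min G hG C hCclosed hCconv νplus hlast Pi' hPi M₀ hM₀
  refine ⟨hdual, hmin, ?_⟩
  intro Mε hMε u s hlub hopt
  exact scaling_form ε hε G hG C Pi' hPi hdual Mε hMε u s hlub hopt
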